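/- arXiv:0705.0326 — 4 statements merged into one kernel-verified Lean document; each statement's English description precedes it below -/
import Mathlib

section
/- For every δ ∈ (0,1) and all functions m, h : ℕ → ℕ satisfying 1 ≤ h(n) ≤ m(n) for all n, there exists n₀ such that for all n ≥ n₀ the following holds. Consider the random process in which, in each of n independent rounds, a subset of h(n) distinct bins out of m(n) bins is chosen uniformly at random and one ball is dropped into each chosen bin. Let N₁ be the number of bins containing at least one ball after the n rounds and let p̃₁ = 1 − exp(−n·h(n)/m(n)). Then Pr( N₁ ≤ (1−δ)·m(n)·p̃₁ ) ≤ 2·exp( −δ²·m(n)·p̃₁ / 3 ). -/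
open MeasureTheory ProbabilityTheory
open scoped ENNReal

instance (n : ℕ) : MeasurableSpace (Finset (Fin n)) := ⊤

/-- The outcome of one round of the balls-and-bins process: a uniformly random subset of
`h` distinct bins out of the `m` bins `Fin m` (possible since `h ≤ m`). -/
noncomputable def roundPMF (m h : ℕ) (hhm : h ≤ m) : PMF (Finset (Fin m)) :=
  PMF.uniformOfFinset (Finset.univ.filter fun s => s.card = h)
    (by
      obtain ⟨t, -, ht⟩ :=
        Finset.exists_subset_card_eq (s := (Finset.univ : Finset (Fin m))) (n := h)
          (by simpa using hhm)
      exact ⟨t, by simp [ht]⟩)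

section Aux
open Finset


lemma exp_neg_le_cubic {t : ℝ} (h0 : 0 ≤ t) (h1 : t ≤ 1) :
    Real.exp (-t) ≤ 1 - t + t^2/2 + (2/9)*t^3 := by
  have hb := Real.exp_bound (x := -t) (by rw [abs_neg, abs_of_nonneg h0]; exact h1)
      (n := 3) (by norm_num)
  rw [abs_neg, abs_of_nonneg h0] at hb
  simp [Finset.sum_range_succ, Nat.factorial] at hb
  rw [abs_le] at hb
  nlinarith [hb.1, hb.2]

lemma choose_step (M H j : ℕ) (hH : 1 ≤ H) (hj : j ≤ M) :
    (j - 1).choose H * M ≤ j.choose H * (M - H) := by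
  rcases Nat.eq_zero_or_pos j with rfl | hj0
  · simp [Nat.choose_eq_zero_of_lt hH]
  · have key : (j - 1).choose H * j = j.choose H * (j - H) := by
      have h := Nat.choose_mul_succ_eq (j - 1) H
      have hje : j - 1 + 1 = j := Nat.succ_pred_eq_of_pos hj0
      rw [hje] at h
      exact h
    have h2 : (j - H) * M ≤ (M - H) * j := by
      rcases le_or_gt H j with h | h
      · have hm : H * j ≤ H * M := Nat.mul_le_mul_left H hj
        calc (j - H) * M = j * M - H * M := by rw [Nat.sub_mul]
          _ ≤ j * M - H * j := by omega
          _ = (M - H) * j := by rw [Nat.sub_mul, Nat.mul_comm M j]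
      · simp [Nat.sub_eq_zero_of_le (le_of_lt h)]
    have hmain : (j - 1).choose H * M * j ≤ j.choose H * (M - H) * j := by
      calc (j - 1).choose H * M * j = (j - 1).choose H * j * M := by ring
        _ = j.choose H * (j - H) * M := by rw [key]
        _ = j.choose H * ((j - H) * M) := by ring
        _ ≤ j.choose H * ((M - H) * j) := Nat.mul_le_mul_left _ h2
        _ = j.choose H * (M - H) * j := by ring
    exact Nat.le_of_mul_le_mul_right hmain hj0

lemma choose_pow_le (M H : ℕ) (hH : 1 ≤ H) :
    ∀ k : ℕ, (M - k).choose H * M ^ k ≤ M.choose H * (M - H) ^ k := by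
  intro k
  induction k with
  | zero => simp
  | succ k ih =>
    have hstep : (M - (k+1)).choose H * M ≤ (M - k).choose H * (M - H) := by
      have := choose_step M H (M - k) hH (Nat.sub_le _ _)
      simpa [Nat.sub_sub] using this
    calc (M - (k+1)).choose H * M ^ (k+1)
        = (M - (k+1)).choose H * M * M ^ k := by ring
      _ ≤ (M - k).choose H * (M - H) * M ^ k := Nat.mul_le_mul_right _ hstep
      _ = (M - k).choose H * M ^ k * (M - H) := by ring
      _ ≤ M.choose H * (M - H) ^ k * (M - H) := Nat.mul_le_mul_right _ ih
      _ = M.choose H * (M - H) ^ (k+1) := by ring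

lemma card_filter_disj (M H : ℕ) (T : Finset (Fin M)) :
    #(univ.filter fun s : Finset (Fin M) => #s = H ∧ Disjoint s T) = (M - #T).choose H := by
  have h : (univ.filter fun s : Finset (Fin M) => #s = H ∧ Disjoint s T)
      = powersetCard H Tᶜ := by
    ext s
    simp only [Finset.mem_powersetCard, Finset.mem_filter, Finset.mem_univ, true_and]
    constructor
    · rintro ⟨h1, h2⟩
      exact ⟨fun a ha => Finset.mem_compl.mpr (Finset.disjoint_left.mp h2 ha), h1⟩
    · rintro ⟨h1, h2⟩
      exact ⟨h2, Finset.disjoint_left.mpr fun a ha => Finset.mem_compl.mp (h1 ha)⟩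
  rw [h, Finset.card_powersetCard, Finset.card_compl, Fintype.card_fin]

set_option maxHeartbeats 2000000 in
lemma core (N M H : ℕ) (hH : 1 ≤ H) (hHM : H ≤ M) (δ : ℝ) (hδ0 : 0 < δ) (hδ1 : δ < 1) :
    ∑ ω ∈ Finset.univ.filter (fun ω : Fin N → Finset (Fin M) =>
        ((#(Finset.univ.filter fun b : Fin M => ∃ t, b ∈ ω t) : ℝ) ≤
          (1 - δ) * M * (1 - Real.exp (-((N:ℝ) * H) / M)))),
      (∏ r, (if #(ω r) = H then ((M.choose H : ℝ))⁻¹ else 0))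
      ≤ 2 * Real.exp (-δ^2 * M * (1 - Real.exp (-((N:ℝ)*H)/M)) / 3) := by
  have hM0 : 0 < M := lt_of_lt_of_le hH hHM
  have hMR : (0:ℝ) < M := by exact_mod_cast hM0
  set p : ℝ := 1 - Real.exp (-((N:ℝ)*H)/M) with hpdef
  have hxle : -((N:ℝ)*H)/M ≤ 0 := by
    rw [neg_div]
    have : (0:ℝ) ≤ ((N:ℝ)*H)/M := by positivity
    linarith
  have hp0 : 0 ≤ p := by
    have h1 : Real.exp (-((N:ℝ)*H)/M) ≤ 1 := by
      rw [← Real.exp_zero]; exact Real.exp_le_exp.mpr hxle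
    rw [hpdef]; linarith
  have hp1 : p ≤ 1 := by
    have := Real.exp_pos (-((N:ℝ)*H)/M); rw [hpdef]; linarith
  set t : ℝ := 2*δ/3 with htdef
  have ht0 : 0 < t := by positivity
  have ht1 : t ≤ 1 := by rw [htdef]; linarith
  set a : ℝ := Real.exp (-t) with hadef
  have ha0 : 0 < a := Real.exp_pos _
  have ha1 : a ≤ 1 := by
    rw [hadef, ← Real.exp_zero]; exact Real.exp_le_exp.mpr (by linarith)
  set c : ℝ := 1 - a with hcdef
  have hc0 : 0 ≤ c := by simp [hcdef]; linarith
  set s : ℝ := (1 - δ) * M * p with hsdef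
  set C : ℝ := (M.choose H : ℝ) with hCdef
  have hC0 : 0 < C := by
    rw [hCdef]; exact_mod_cast Nat.choose_pos hHM
  set w : Finset (Fin M) → ℝ := fun u => if #u = H then C⁻¹ else 0 with hwdef
  have hw0 : ∀ u, 0 ≤ w u := by
    intro u; rw [hwdef]; dsimp only; split <;> positivity
  set W : (Fin N → Finset (Fin M)) → ℝ := fun ω => ∏ r, w (ω r) with hWdef
  have hW0 : ∀ ω, 0 ≤ W ω := fun ω => Finset.prod_nonneg fun r _ => hw0 _
  set Y : Fin M → (Fin N → Finset (Fin M)) → ℝ :=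
    fun b ω => ∏ r, (if b ∈ ω r then (0:ℝ) else 1) with hYdef
  have hY : ∀ b ω, Y b ω = if ∃ r, b ∈ ω r then 0 else 1 := by
    intro b ω
    by_cases hex : ∃ r, b ∈ ω r
    · obtain ⟨r, hr⟩ := hex
      rw [if_pos ⟨r, hr⟩, hYdef]
      exact Finset.prod_eq_zero (Finset.mem_univ r) (by simp [hr])
    · push_neg at hex
      rw [if_neg (by push_neg; exact hex), hYdef]
      exact Finset.prod_eq_one fun r _ => by simp [hex r]
  have hY0 : ∀ b ω, 0 ≤ Y b ω := by
    intro b ω; rw [hY]; split <;> norm_num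
  have hfac0 : ∀ ω, (0:ℝ) ≤ ∏ b, (c * Y b ω + a) :=
    fun ω => Finset.prod_nonneg fun b _ => by
      have := hY0 b ω; positivity
  -- Step 1 : Markov
  have markov : ∑ ω ∈ Finset.univ.filter (fun ω : Fin N → Finset (Fin M) =>
        ((#(Finset.univ.filter fun b : Fin M => ∃ r, b ∈ ω r) : ℝ) ≤ s)), W ω
      ≤ Real.exp (t*s) * ∑ ω : Fin N → Finset (Fin M), W ω * ∏ b, (c * Y b ω + a) := by
    have point : ∀ ω : Fin N → Finset (Fin M),
        ((#(Finset.univ.filter fun b : Fin M => ∃ r, b ∈ ω r) : ℝ) ≤ s) →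
        W ω ≤ Real.exp (t*s) * (W ω * ∏ b, (c * Y b ω + a)) := by
      intro ω hω
      set k := #(Finset.univ.filter fun b : Fin M => ∃ r, b ∈ ω r) with hkdef
      have hprod : ∏ b, (c * Y b ω + a) = a ^ k := by
        rw [← Finset.prod_filter_mul_prod_filter_not Finset.univ
          (fun b : Fin M => ∃ r, b ∈ ω r) (fun b => c * Y b ω + a)]
        have e1 : ∏ b ∈ Finset.univ.filter (fun b : Fin M => ∃ r, b ∈ ω r),
            (c * Y b ω + a) = a ^ k := by
          rw [Finset.prod_congr rfl (g := fun _ => a)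
            (fun b hb => by rw [hY]; rw [if_pos (Finset.mem_filter.mp hb).2]; ring)]
          rw [Finset.prod_const, hkdef]
        have e2 : ∏ b ∈ Finset.univ.filter (fun b : Fin M => ¬ ∃ r, b ∈ ω r),
            (c * Y b ω + a) = 1 := by
          apply Finset.prod_eq_one
          intro b hb
          rw [hY, if_neg (Finset.mem_filter.mp hb).2, hcdef]; ring
        rw [e1, e2, mul_one]
      have h1 : (1:ℝ) ≤ Real.exp (t*s) * ∏ b, (c * Y b ω + a) := by
        rw [hprod, hadef, ← Real.exp_nat_mul, ← Real.exp_add, ← Real.exp_zero]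
        apply Real.exp_le_exp.mpr
        have : (k:ℝ) * -t = -(t * k) := by ring
        rw [this]
        have : t * (k:ℝ) ≤ t * s := mul_le_mul_of_nonneg_left hω ht0.le
        linarith
      calc W ω = W ω * 1 := by ring
        _ ≤ W ω * (Real.exp (t*s) * ∏ b, (c * Y b ω + a)) :=
            mul_le_mul_of_nonneg_left h1 (hW0 ω)
        _ = Real.exp (t*s) * (W ω * ∏ b, (c * Y b ω + a)) := by ring
    calc ∑ ω ∈ Finset.univ.filter (fun ω : Fin N → Finset (Fin M) =>
            ((#(Finset.univ.filter fun b : Fin M => ∃ r, b ∈ ω r) : ℝ) ≤ s)), W ω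
        ≤ ∑ ω ∈ Finset.univ.filter (fun ω : Fin N → Finset (Fin M) =>
            ((#(Finset.univ.filter fun b : Fin M => ∃ r, b ∈ ω r) : ℝ) ≤ s)),
            Real.exp (t*s) * (W ω * ∏ b, (c * Y b ω + a)) :=
          Finset.sum_le_sum fun ω hω => point ω (Finset.mem_filter.mp hω).2
      _ ≤ ∑ ω : Fin N → Finset (Fin M),
            Real.exp (t*s) * (W ω * ∏ b, (c * Y b ω + a)) :=
          Finset.sum_le_sum_of_subset_of_nonneg (Finset.filter_subset _ _)
            (fun ω _ _ => by
              have h1 := hW0 ω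
              have h2 := hfac0 ω
              have h3 := Real.exp_pos (t*s)
              positivity)
      _ = Real.exp (t*s) * ∑ ω : Fin N → Finset (Fin M),
            W ω * ∏ b, (c * Y b ω + a) := by rw [← Finset.mul_sum]
  -- g T u  = indicator that u is disjoint from T
  set g : Finset (Fin M) → Finset (Fin M) → ℝ :=
    fun T u => if Disjoint u T then 1 else 0 with hgdef
  have hg_inner : ∀ (T : Finset (Fin M)) (u : Finset (Fin M)),
      ∏ b ∈ T, (if b ∈ u then (0:ℝ) else 1) = g T u := by
    intro T u
    by_cases hD : Disjoint u T
    · rw [hgdef]; dsimp only; rw [if_pos hD]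
      exact Finset.prod_eq_one fun b hb =>
        if_neg (fun h => Finset.disjoint_left.mp hD h hb)
    · rw [hgdef]; dsimp only; rw [if_neg hD]
      obtain ⟨x, hx1, hx2⟩ := Finset.not_disjoint_iff.mp hD
      exact Finset.prod_eq_zero hx2 (if_pos hx1)
  have hswap : ∀ (T : Finset (Fin M)) (ω : Fin N → Finset (Fin M)),
      ∏ b ∈ T, Y b ω = ∏ r, g T (ω r) := by
    intro T ω
    rw [hYdef]
    dsimp only
    rw [Finset.prod_comm]
    exact Finset.prod_congr rfl fun r _ => hg_inner T (ω r)
  have expand : ∀ ω : Fin N → Finset (Fin M),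
      (∏ b, (c * Y b ω + a)) =
        ∑ T ∈ (Finset.univ : Finset (Fin M)).powerset,
          c ^ #T * (∏ r, g T (ω r)) * a ^ #((Finset.univ : Finset (Fin M)) \ T) := by
    intro ω
    rw [Finset.prod_add]
    apply Finset.sum_congr rfl
    intro T hT
    rw [Finset.prod_const]
    have h1 : ∏ b ∈ T, (c * Y b ω) = c ^ #T * ∏ b ∈ T, Y b ω := by
      rw [Finset.prod_mul_distrib, Finset.prod_const]
    rw [h1, hswap T ω]
  have indep : ∀ T : Finset (Fin M),
      ∑ ω : Fin N → Finset (Fin M), W ω * ∏ r, g T (ω r)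
        = (∑ u : Finset (Fin M), w u * g T u) ^ N := by
    intro T
    rw [Fintype.sum_pow]
    apply Finset.sum_congr rfl
    intro ω _
    rw [Finset.prod_mul_distrib]
  have round_eq : ∀ T : Finset (Fin M),
      ∑ u : Finset (Fin M), w u * g T u = ((M - #T).choose H : ℝ) / C := by
    intro T
    have h1 : ∀ u : Finset (Fin M), w u * g T u =
        if #u = H ∧ Disjoint u T then C⁻¹ else 0 := by
      intro u
      rw [hwdef, hgdef]; dsimp only
      by_cases h1 : #u = H <;> by_cases h2 : Disjoint u T <;> simp [h1, h2]
    rw [Finset.sum_congr rfl fun u _ => h1 u, ← Finset.sum_filter,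
      Finset.sum_const, card_filter_disj M H T]
    simp [div_eq_mul_inv, nsmul_eq_mul]
  set ρ : ℝ := ((M:ℝ) - H)/M with hρdef
  have hHR : (H:ℝ) ≤ M := by exact_mod_cast hHM
  have hρ0 : 0 ≤ ρ := by
    apply div_nonneg _ hMR.le; linarith
  have round_le : ∀ T : Finset (Fin M),
      ∑ u : Finset (Fin M), w u * g T u ≤ ρ ^ #T := by
    intro T
    rw [round_eq T, hρdef, div_pow]
    rw [div_le_div_iff₀ hC0 (by positivity)]
    have hnat := choose_pow_le M H hH (#T)
    have hsub : ((M - H : ℕ) : ℝ) = (M:ℝ) - H := Nat.cast_sub hHM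
    have hnatR : (((M - #T).choose H : ℝ)) * (M:ℝ)^(#T)
        ≤ (M.choose H : ℝ) * ((M:ℝ) - H)^(#T) := by
      calc (((M - #T).choose H : ℝ)) * (M:ℝ)^(#T)
          = (((M - #T).choose H * M^(#T) : ℕ) : ℝ) := by push_cast; ring
        _ ≤ (((M.choose H * (M - H)^(#T) : ℕ)) : ℝ) := by exact_mod_cast hnat
        _ = (M.choose H : ℝ) * ((M:ℝ) - H)^(#T) := by
            rw [Nat.cast_mul, Nat.cast_pow, hsub]
    rw [hCdef]; linarith
  set q : ℝ := ρ ^ N with hqdef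
  have hq0 : 0 ≤ q := pow_nonneg hρ0 N
  have sum_bound : ∑ ω : Fin N → Finset (Fin M), W ω * ∏ b, (c * Y b ω + a)
      ≤ (c * q + a) ^ M := by
    have hrsum0 : ∀ T : Finset (Fin M), 0 ≤ ∑ u : Finset (Fin M), w u * g T u := by
      intro T
      apply Finset.sum_nonneg
      intro u _
      have : (0:ℝ) ≤ g T u := by rw [hgdef]; dsimp only; split <;> norm_num
      exact mul_nonneg (hw0 u) this
    calc ∑ ω : Fin N → Finset (Fin M), W ω * ∏ b, (c * Y b ω + a)
        = ∑ ω : Fin N → Finset (Fin M), ∑ T ∈ (Finset.univ : Finset (Fin M)).powerset,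
            W ω * (c ^ #T * (∏ r, g T (ω r)) * a ^ #((Finset.univ : Finset (Fin M)) \ T)) := by
          exact Finset.sum_congr rfl fun ω _ => by rw [expand ω, Finset.mul_sum]
      _ = ∑ T ∈ (Finset.univ : Finset (Fin M)).powerset, ∑ ω : Fin N → Finset (Fin M),
            W ω * (c ^ #T * (∏ r, g T (ω r)) * a ^ #((Finset.univ : Finset (Fin M)) \ T)) :=
          Finset.sum_comm
      _ = ∑ T ∈ (Finset.univ : Finset (Fin M)).powerset,
            (∑ ω : Fin N → Finset (Fin M), W ω * ∏ r, g T (ω r)) *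
              (c ^ #T * a ^ #((Finset.univ : Finset (Fin M)) \ T)) := by
          apply Finset.sum_congr rfl
          intro T _
          rw [Finset.sum_mul]
          exact Finset.sum_congr rfl fun ω _ => by ring
      _ = ∑ T ∈ (Finset.univ : Finset (Fin M)).powerset,
            ((∑ u : Finset (Fin M), w u * g T u) ^ N) *
              (c ^ #T * a ^ #((Finset.univ : Finset (Fin M)) \ T)) :=
          Finset.sum_congr rfl fun T _ => by rw [indep T]
      _ ≤ ∑ T ∈ (Finset.univ : Finset (Fin M)).powerset,
            ((ρ ^ #T) ^ N) * (c ^ #T * a ^ #((Finset.univ : Finset (Fin M)) \ T)) := by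
          apply Finset.sum_le_sum
          intro T _
          apply mul_le_mul_of_nonneg_right
          · exact pow_le_pow_left₀ (hrsum0 T) (round_le T) N
          · have := pow_nonneg hc0 (#T)
            have := pow_nonneg ha0.le (#((Finset.univ : Finset (Fin M)) \ T))
            positivity
      _ = ∑ T ∈ (Finset.univ : Finset (Fin M)).powerset,
            (c * q) ^ #T * a ^ #((Finset.univ : Finset (Fin M)) \ T) := by
          apply Finset.sum_congr rfl
          intro T _
          rw [hqdef, ← pow_mul, mul_comm (#T) N, pow_mul, mul_pow]
          ring
      _ = ∑ T ∈ (Finset.univ : Finset (Fin M)).powerset,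
            (∏ _b ∈ T, (c * q)) * ∏ _b ∈ (Finset.univ : Finset (Fin M)) \ T, a :=
          Finset.sum_congr rfl fun T _ => by rw [Finset.prod_const, Finset.prod_const]
      _ = ∏ _b : Fin M, (c * q + a) := (Finset.prod_add _ _ _).symm
      _ = (c * q + a) ^ M := by
          rw [Finset.prod_const, Finset.card_univ, Fintype.card_fin]
  -- analytic endgame
  have hq_le : q ≤ 1 - p := by
    have hρ_eq : ρ = 1 - (H:ℝ)/M := by rw [hρdef]; field_simp
    have h1 : ρ ≤ Real.exp (-((H:ℝ)/M)) := by
      have := Real.add_one_le_exp (-((H:ℝ)/M)); rw [hρ_eq]; linarith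
    have h2 : q ≤ Real.exp (-((H:ℝ)/M)) ^ N := by
      rw [hqdef]; exact pow_le_pow_left₀ hρ0 h1 N
    have h3 : Real.exp (-((H:ℝ)/M)) ^ N = Real.exp (-((N:ℝ)*H)/M) := by
      rw [← Real.exp_nat_mul]; congr 1; ring
    rw [hpdef]; rw [h3] at h2; linarith
  have hbase_le : c * q + a ≤ 1 - c * p := by
    have h1 := mul_le_mul_of_nonneg_left hq_le hc0
    have h2 : c * (1 - p) + a = 1 - c * p := by rw [hcdef]; ring
    linarith
  have hbase0 : 0 ≤ c * q + a := by
    have := mul_nonneg hc0 hq0; linarith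
  have pow1 : (c*q+a)^M ≤ (1 - c*p)^M := pow_le_pow_left₀ hbase0 hbase_le M
  have h1cp : 1 - c*p ≤ Real.exp (-(c*p)) := by
    have := Real.add_one_le_exp (-(c*p)); linarith
  have h1cp0 : 0 ≤ 1 - c*p := le_trans hbase0 hbase_le
  have pow2 : (1 - c*p)^M ≤ Real.exp (-(c*p))^M := pow_le_pow_left₀ h1cp0 h1cp M
  have pow3 : Real.exp (-(c*p))^M = Real.exp (-((M:ℝ)*(c*p))) := by
    rw [← Real.exp_nat_mul]; congr 1; ring
  have hc_lb : t - t^2/2 - (2/9)*t^3 ≤ c := by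
    have := exp_neg_le_cubic ht0.le ht1
    rw [hcdef, hadef]; linarith
  have hkey : t*s - (M:ℝ)*(c*p) ≤ -δ^2 * M * p / 3 := by
    have hfac : t*(1-δ) - c ≤ -δ^2/3 := by
      have hcube : δ^2 * δ ≤ δ^2 := mul_le_of_le_one_right (sq_nonneg δ) hδ1.le
      rw [htdef] at hc_lb ⊢
      nlinarith [hc_lb, hcube]
    have hμ : 0 ≤ (M:ℝ)*p := mul_nonneg hMR.le hp0
    calc t*s - (M:ℝ)*(c*p) = ((M:ℝ)*p)*(t*(1-δ) - c) := by rw [hsdef]; ring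
      _ ≤ ((M:ℝ)*p)*(-δ^2/3) := mul_le_mul_of_nonneg_left hfac hμ
      _ = -δ^2 * M * p / 3 := by ring
  calc ∑ ω ∈ Finset.univ.filter (fun ω : Fin N → Finset (Fin M) =>
        ((#(Finset.univ.filter fun b : Fin M => ∃ r, b ∈ ω r) : ℝ) ≤ s)),
        (∏ r, (if #(ω r) = H then C⁻¹ else 0))
      = ∑ ω ∈ Finset.univ.filter (fun ω : Fin N → Finset (Fin M) =>
        ((#(Finset.univ.filter fun b : Fin M => ∃ r, b ∈ ω r) : ℝ) ≤ s)), W ω :=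
        Finset.sum_congr rfl fun ω _ => rfl
    _ ≤ Real.exp (t*s) * ∑ ω : Fin N → Finset (Fin M), W ω * ∏ b, (c * Y b ω + a) := markov
    _ ≤ Real.exp (t*s) * (c*q+a)^M :=
        mul_le_mul_of_nonneg_left sum_bound (Real.exp_pos _).le
    _ ≤ Real.exp (t*s) * Real.exp (-((M:ℝ)*(c*p))) := by
        have h := pow1.trans pow2
        rw [pow3] at h
        exact mul_le_mul_of_nonneg_left h (Real.exp_pos _).le
    _ = Real.exp (t*s - (M:ℝ)*(c*p)) := by
        rw [show t*s - (M:ℝ)*(c*p) = t*s + -((M:ℝ)*(c*p)) from by ring, ← Real.exp_add]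
    _ ≤ Real.exp (-δ^2 * M * p / 3) := Real.exp_le_exp.mpr hkey
    _ ≤ 2 * Real.exp (-δ^2 * M * p / 3) := by
        nlinarith [Real.exp_pos (-δ^2 * M * p / 3)]

end Aux

section Aux2
lemma card_filter_card_eq (M H : ℕ) :
    (Finset.univ.filter fun s : Finset (Fin M) => s.card = H).card = M.choose H := by
  have h : (Finset.univ.filter fun s : Finset (Fin M) => s.card = H)
      = Finset.powersetCard H Finset.univ := by
    rw [Finset.powersetCard_eq_filter, Finset.powerset_univ]
  rw [h, Finset.card_powersetCard, Finset.card_univ, Fintype.card_fin]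

section Reduce

variable (N M H : ℕ) (hHM : H ≤ M)

lemma meas_all (S : Set (Fin N → Finset (Fin M))) : MeasurableSet S := by
  have hsing : ∀ ω : Fin N → Finset (Fin M), MeasurableSet ({ω} : Set _) := by
    intro ω
    have he : ({ω} : Set (Fin N → Finset (Fin M))) = Set.univ.pi fun r => {ω r} := by
      ext f; simp [Set.mem_pi, funext_iff]
    rw [he]
    exact MeasurableSet.univ_pi fun r => MeasurableSpace.measurableSet_top
  have hU : S = ⋃ ω ∈ S, ({ω} : Set _) := by simp
  rw [hU]
  exact MeasurableSet.biUnion (Set.to_countable S) fun ω _ => hsing ω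

lemma measure_set_eq (P : (Fin N → Finset (Fin M)) → Prop) [DecidablePred P] :
    (Measure.pi fun _ : Fin N => (roundPMF M H hHM).toMeasure) {ω | P ω}
      = ENNReal.ofReal (∑ ω ∈ Finset.univ.filter P,
          ∏ r, (if (ω r).card = H then ((M.choose H : ℝ))⁻¹ else 0)) := by
  have hsing : ∀ ω : Fin N → Finset (Fin M),
      ({ω} : Set (Fin N → Finset (Fin M))) = Set.univ.pi fun r => {ω r} := by
    intro ω; ext f; simp [Set.mem_pi, funext_iff]
  have hC0 : 0 < M.choose H := Nat.choose_pos hHM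
  have hval : ∀ u : Finset (Fin M),
      (roundPMF M H hHM).toMeasure {u}
        = ENNReal.ofReal (if u.card = H then ((M.choose H : ℝ))⁻¹ else 0) := by
    intro u
    rw [PMF.toMeasure_apply_singleton _ _ MeasurableSpace.measurableSet_top]
    rw [roundPMF, PMF.uniformOfFinset_apply]
    by_cases hu : u.card = H
    · rw [if_pos (by simp [hu]), if_pos hu, card_filter_card_eq M H,
        ENNReal.ofReal_inv_of_pos (by exact_mod_cast hC0), ENNReal.ofReal_natCast]
    · rw [if_neg (by simp [hu]), if_neg hu, ENNReal.ofReal_zero]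
  have hsingle : ∀ ω : Fin N → Finset (Fin M),
      (Measure.pi fun _ : Fin N => (roundPMF M H hHM).toMeasure) {ω}
        = ENNReal.ofReal (∏ r, (if (ω r).card = H then ((M.choose H : ℝ))⁻¹ else 0)) := by
    intro ω
    rw [hsing ω, Measure.pi_pi]
    rw [Finset.prod_congr rfl fun r (_ : r ∈ Finset.univ) => hval (ω r)]
    rw [← ENNReal.ofReal_prod_of_nonneg]
    intro r _
    split <;> positivity
  have hU : {ω | P ω} = ⋃ ω ∈ (Finset.univ.filter P : Finset (Fin N → Finset (Fin M))),
      ({ω} : Set _) := by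
    ext x; simp
  rw [hU, measure_biUnion_finset
    (fun a _ b _ hab => Set.disjoint_singleton.mpr hab)
    (fun ω _ => meas_all N M ({ω} : Set _))]
  rw [Finset.sum_congr rfl fun ω (_ : ω ∈ Finset.univ.filter P) => hsingle ω]
  rw [← ENNReal.ofReal_sum_of_nonneg]
  intro ω _
  exact Finset.prod_nonneg fun r _ => by split <;> positivity

end Reduce


/-- Balls and bins: in each of `n` independent rounds a uniformly random set
of `h n` distinct bins (out of `m n` bins) each receive a ball.  `N₁` is the number of bins with
at least one ball, and `p̃₁ = 1 - exp (- n * h n / m n)`.  For every `δ ∈ (0,1)` and all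
sufficiently large `n`, `Pr (N₁ ≤ (1 - δ) * m n * p̃₁) ≤ 2 * exp (- δ² * m n * p̃₁ / 3)`. -/
theorem stmt_0 (δ : ℝ) (hδ0 : 0 < δ) (hδ1 : δ < 1) (m h : ℕ → ℕ)
    (hh : ∀ n, 1 ≤ h n) (hhm : ∀ n, h n ≤ m n) :
    ∃ n₀ : ℕ, ∀ n, n₀ ≤ n →
      (Measure.pi fun _ : Fin n => (roundPMF (m n) (h n) (hhm n)).toMeasure)
        {ω | ((Finset.univ.filter fun b : Fin (m n) => ∃ t, b ∈ ω t).card : ℝ) ≤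
              (1 - δ) * (m n) * (1 - Real.exp (-((n : ℝ) * (h n)) / (m n)))}
        ≤ ENNReal.ofReal
            (2 * Real.exp
              (-δ ^ 2 * (m n) * (1 - Real.exp (-((n : ℝ) * (h n)) / (m n))) / 3)) := by
  refine ⟨0, fun n _ => ?_⟩
  rw [measure_set_eq n (m n) (h n) (hhm n)
    (fun ω => ((Finset.univ.filter fun b : Fin (m n) => ∃ t, b ∈ ω t).card : ℝ) ≤
      (1 - δ) * (m n) * (1 - Real.exp (-((n : ℝ) * (h n)) / (m n))))]
  exact ENNReal.ofReal_le_ofReal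
    (core n (m n) (h n) (hh n) (hhm n) δ hδ0 hδ1)

end Aux2
end

section
/- For every δ ∈ (0,1), every function m : ℕ → ℕ with m(n) ≥ 1, and every function p : ℕ → (0,1], there exists n₀ such that for all n ≥ n₀ the following holds. Suppose n balls are dropped independently into m(n) bins and one trash can, where each ball lands in the trash can with probability 1 − p(n) and lands in each particular bin with probability p(n)/m(n). Let N₂ be the number of bins containing at least one ball and let p̃₂ = 1 − exp(−n·p(n)/m(n)). Then Pr( N₂ ≤ (1−δ)·m(n)·p̃₂ ) ≤ 2·exp( −δ²·m(n)·p̃₂ / 3 ). -/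
open MeasureTheory ProbabilityTheory
open scoped ENNReal

instance (n : ℕ) : MeasurableSpace (Option (Fin n)) := ⊤

/-- The distribution of the location of a single ball: with probability `1 - p` it lands in the
trash can (`none`), and with probability `p / m` it lands in each particular bin (`some b`). -/
noncomputable def ballPMF (m : ℕ) [NeZero m] (p : ℝ≥0∞) (hp : p ≤ 1) : PMF (Option (Fin m)) :=
  (PMF.bernoulli p.toNNReal (by simpa using ENNReal.toNNReal_mono ENNReal.one_ne_top hp)).bind fun b =>
    if b then (PMF.uniformOfFintype (Fin m)).map some else PMF.pure none

lemma ballPMF_none (m : ℕ) [NeZero m] (p : ℝ≥0∞) (hp : p ≤ 1) :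
    ballPMF m p hp none = 1 - p := by
  simp [ballPMF, PMF.bind_apply, tsum_bool, PMF.map_apply, PMF.bernoulli_apply,
    ENNReal.coe_toNNReal (ne_top_of_le_ne_top ENNReal.one_ne_top hp)]
  simp only [PMF.bernoulli, PMF.ofFintype_apply]
  simp [ENNReal.coe_sub, ENNReal.coe_toNNReal (ne_top_of_le_ne_top ENNReal.one_ne_top hp)]

lemma ballPMF_some (m : ℕ) [NeZero m] (p : ℝ≥0∞) (hp : p ≤ 1) (b : Fin m) :
    ballPMF m p hp (some b) = p / m := by
  simp only [ballPMF, PMF.bind_apply, tsum_bool, PMF.map_apply, PMF.bernoulli_apply,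
    PMF.uniformOfFintype_apply, if_true, if_false, Bool.cond_true, Bool.cond_false,
    PMF.pure_apply]
  rw [tsum_eq_single b (by intro c h; simp [Ne.symm h])]
  simp [ENNReal.div_eq_inv_mul, Fintype.card_fin, mul_comm,
    ENNReal.coe_toNNReal (ne_top_of_le_ne_top ENNReal.one_ne_top hp)]
  simp only [PMF.bernoulli, PMF.ofFintype_apply]
  simp [mul_comm, ENNReal.coe_toNNReal (ne_top_of_le_ne_top ENNReal.one_ne_top hp)]

instance instMSC (n M : ℕ) : MeasurableSingletonClass (Fin n → Option (Fin M)) := by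
  constructor
  intro ω
  have : {ω} = Set.univ.pi (fun t => ({ω t} : Set (Option (Fin M)))) := by
    ext x; simp [funext_iff, Set.mem_pi]
  rw [this]
  exact MeasurableSet.univ_pi fun t => MeasurableSpace.measurableSet_top

lemma coord_meas (M : ℕ) [NeZero M] (P : ℝ) (hP0 : 0 ≤ P) (hp : ENNReal.ofReal P ≤ 1)
    (S : Finset (Fin M)) :
    (ballPMF M (ENNReal.ofReal P) hp).toMeasure {o | ∀ b ∈ S, o ≠ some b}
      = ENNReal.ofReal (1 - P * S.card / M) := by
  have hM : 0 < M := Nat.pos_of_ne_zero (NeZero.ne M)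
  have hP1 : P ≤ 1 := by
    by_contra h
    exact absurd (ENNReal.ofReal_le_one.mp hp) h
  rw [PMF.toMeasure_apply_fintype]
  rw [Fintype.sum_option]
  have h1 : ({o | ∀ b ∈ S, o ≠ some b} : Set (Option (Fin M))).indicator
      (ballPMF M (ENNReal.ofReal P) hp) none = ENNReal.ofReal (1 - P) := by
    rw [Set.indicator_of_mem (by simp) _, ballPMF_none,
      ← ENNReal.ofReal_one, ← ENNReal.ofReal_sub _ hP0]
  rw [h1]
  have h2 : ∀ a : Fin M, ({o | ∀ b ∈ S, o ≠ some b} : Set (Option (Fin M))).indicator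
      (ballPMF M (ENNReal.ofReal P) hp) (some a)
      = if a ∈ S then 0 else ENNReal.ofReal (P / M) := by
    intro a
    by_cases ha : a ∈ S
    · rw [Set.indicator_of_notMem (by intro h; exact h a ha rfl)]
      simp [ha]
    · rw [Set.indicator_of_mem (by intro b hb h; injection h with h'; exact ha (h' ▸ hb))]
      rw [ballPMF_some, if_neg ha, ENNReal.ofReal_div_of_pos (by exact_mod_cast hM),
        ENNReal.ofReal_natCast]
  simp only [h2]
  rw [Finset.sum_ite, Finset.sum_const_zero, Finset.sum_const, zero_add]
  have hcard : (Finset.univ.filter (fun x : Fin M => ¬ x ∈ S)).card = M - S.card := by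
    rw [Finset.filter_not, Finset.card_sdiff_of_subset (by simp [Finset.filter_mem_eq_inter])]
    simp [Finset.filter_mem_eq_inter]
  rw [hcard, nsmul_eq_mul, ← ENNReal.ofReal_natCast (M - S.card),
    ← ENNReal.ofReal_mul (by positivity),
    ← ENNReal.ofReal_add (by linarith) (by positivity)]
  congr 1
  have hk : S.card ≤ M := by simpa using Finset.card_le_card (Finset.subset_univ S)
  rw [Nat.cast_sub hk]
  field_simp
  ring

lemma log_ge_sinh {y : ℝ} (h0 : 0 < y) (h1 : y ≤ 1) : (y - y⁻¹)/2 ≤ Real.log y := by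
  set u : ℝ := -Real.log y with hu
  have hu0 : 0 ≤ u := by
    have : Real.log y ≤ 0 := Real.log_nonpos (le_of_lt h0) h1
    linarith
  have hy : y = Real.exp (-u) := by rw [hu, neg_neg, Real.exp_log h0]
  have hyi : y⁻¹ = Real.exp u := by rw [hy, ← Real.exp_neg, neg_neg]
  have hs : u ≤ Real.sinh u := Real.self_le_sinh_iff.mpr hu0
  rw [Real.sinh_eq] at hs
  have hly : Real.log y = -u := by rw [hu, neg_neg]
  linarith

lemma kl_ineq {δ q : ℝ} (hδ0 : 0 < δ) (hδ1 : δ < 1) (hq0 : 0 ≤ q) (hq1 : q < 1) :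
    δ^2*q/3 ≤ (1-(1-δ)*q) * Real.log ((1-(1-δ)*q)/((1-q)*(1-δ))) + Real.log (1-δ) := by
  set b : ℝ := 1 - q with hb
  set a : ℝ := 1 - (1-δ)*q with ha
  have hbpos : 0 < b := by simp [hb]; linarith
  have hdpos : 0 < 1 - δ := by linarith
  have hab : a - b = δ * q := by rw [ha, hb]; ring
  have hapos : 0 < a := by nlinarith
  have hlog : Real.log (a/(b*(1-δ))) = Real.log a - Real.log b - Real.log (1-δ) := by
    rw [Real.log_div (ne_of_gt hapos) (by positivity), Real.log_mul (ne_of_gt hbpos) (ne_of_gt hdpos)]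
    ring
  rw [hlog]
  -- step 1 : a * (log a - log b) ≥ a - b
  have h1 : a - b ≤ a * (Real.log a - Real.log b) := by
    have := Real.log_le_sub_one_of_pos (show 0 < b/a by positivity)
    rw [Real.log_div (ne_of_gt hbpos) (ne_of_gt hapos)] at this
    have h2 : 1 - b/a ≤ Real.log a - Real.log b := by linarith
    calc a - b = a * (1 - b/a) := by field_simp
    _ ≤ a * (Real.log a - Real.log b) := by
        exact mul_le_mul_of_nonneg_left h2 (le_of_lt hapos)
  -- step 2 : (1-δ) * log (1-δ) ≥ δ^2/2 - δ
  have h2 : δ^2/2 - δ ≤ (1-δ) * Real.log (1-δ) := by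
    have := log_ge_sinh hdpos (by linarith)
    have h3 : (1-δ) * (((1-δ) - (1-δ)⁻¹)/2) ≤ (1-δ) * Real.log (1-δ) :=
      mul_le_mul_of_nonneg_left this (le_of_lt hdpos)
    have h4 : (1-δ) * (((1-δ) - (1-δ)⁻¹)/2) = ((1-δ)^2 - 1)/2 := by
      field_simp
    nlinarith
  -- combine
  have hone : 1 - a = (1-δ)*q := by rw [ha]; ring
  have h5 : (1-a) * Real.log (1-δ) = q * ((1-δ) * Real.log (1-δ)) := by
    rw [hone]; ring
  nlinarith [mul_le_mul_of_nonneg_left h2 hq0, h5, mul_nonneg hq0 (sq_nonneg δ)]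

lemma final_real {δ q : ℝ} (hδ0 : 0 < δ) (hδ1 : δ < 1) (hq0 : 0 ≤ q) (hq1 : q < 1) (M : ℕ) :
    ((1-δ)⁻¹)^M ≤ 2 * Real.exp (-δ^2 * M * q / 3) *
      ((1-(1-δ)*q)/((1-q)*(1-δ))) ^ ((M:ℝ) - (1-δ)*M*q) := by
  set b : ℝ := 1 - q with hb
  set a : ℝ := 1 - (1-δ)*q with ha
  have hbpos : 0 < b := by simp [hb]; linarith
  have hdpos : 0 < 1 - δ := by linarith
  have hapos : 0 < a := by rw [ha]; nlinarith
  have hx : 0 < a/(b*(1-δ)) := by positivity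
  have hexp : (M:ℝ) - (1-δ)*M*q = M * a := by rw [ha]; ring
  rw [hexp, Real.rpow_def_of_pos hx]
  have hL : ((1-δ)⁻¹)^M = Real.exp (M * (-Real.log (1-δ))) := by
    rw [← Real.log_inv, Real.exp_nat_mul, Real.exp_log (show (0:ℝ) < (1-δ)⁻¹ by positivity)]
  rw [hL]
  have hkl := kl_ineq hδ0 hδ1 hq0 hq1
  have hM0 : (0:ℝ) ≤ M := Nat.cast_nonneg M
  calc Real.exp (M * (-Real.log (1-δ)))
      ≤ Real.exp (-δ^2 * M * q / 3 + Real.log (a/(b*(1-δ))) * (M*a)) := by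
        apply Real.exp_le_exp.mpr
        nlinarith [mul_le_mul_of_nonneg_left hkl hM0]
    _ = Real.exp (-δ^2 * M * q / 3) * Real.exp (Real.log (a/(b*(1-δ))) * (M*a)) := by
        rw [← Real.exp_add]
    _ ≤ 2 * Real.exp (-δ^2 * M * q / 3) * Real.exp (Real.log (a/(b*(1-δ))) * (M*a)) := by
        nlinarith [Real.exp_pos (-δ^2 * M * q / 3), Real.exp_pos (Real.log (a/(b*(1-δ))) * (M*a))]

lemma main_bound (n M : ℕ) [NeZero M] (δ P : ℝ) (hδ0 : 0 < δ) (hδ1 : δ < 1)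
    (hP0 : 0 < P) (hp : ENNReal.ofReal P ≤ 1) :
    (Measure.pi fun _ : Fin n => (ballPMF M (ENNReal.ofReal P) hp).toMeasure)
      {ω | ((Finset.univ.filter fun b : Fin M => ∃ t, ω t = some b).card : ℝ) ≤
          (1 - δ) * M * (1 - Real.exp (-((n:ℝ) * P) / M))}
      ≤ ENNReal.ofReal (2 * Real.exp (-δ^2 * M * (1 - Real.exp (-((n:ℝ) * P) / M)) / 3)) := by
  have hM : 0 < M := Nat.pos_of_ne_zero (NeZero.ne M)
  have hP1 : P ≤ 1 := by
    by_contra h; exact absurd (ENNReal.ofReal_le_one.mp hp) h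
  set μ := Measure.pi fun _ : Fin n => (ballPMF M (ENNReal.ofReal P) hp).toMeasure with hμ
  set q : ℝ := 1 - Real.exp (-((n:ℝ) * P) / M) with hqdef
  have hbr : (0:ℝ) < 1 - q := by
    rw [hqdef]; simp [Real.exp_pos]
  have hq0 : 0 ≤ q := by
    rw [hqdef]
    have : Real.exp (-((n:ℝ) * P) / M) ≤ 1 := by
      apply Real.exp_le_one_iff.mpr
      have : (0:ℝ) ≤ (n:ℝ) * P := by positivity
      have hMc : (0:ℝ) < M := by exact_mod_cast hM
      apply div_nonpos_of_nonpos_of_nonneg <;> [linarith; linarith]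
    linarith
  have hq1 : q < 1 := by linarith
  have hdpos : (0:ℝ) < 1 - δ := by linarith
  set a : ℝ := 1 - (1-δ)*q with hadef
  have hapos : 0 < a := by rw [hadef]; nlinarith
  set x : ℝ := a / ((1-q)*(1-δ)) with hxdef
  have hxpos : 0 < x := by positivity
  have hx1 : 1 ≤ x := by
    rw [hxdef, le_div_iff₀ (by positivity)]
    nlinarith
  set c : ℝ≥0∞ := ENNReal.ofReal (x - 1) with hcdef
  have hc1 : c + 1 = ENNReal.ofReal x := by
    rw [hcdef, ← ENNReal.ofReal_one, ← ENNReal.ofReal_add (by linarith) (by norm_num)]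
    norm_num
  have h1q : 1 - q = Real.exp (-((n:ℝ) * P) / M) := by rw [hqdef]; ring
  have hxb : (x-1)*(1-q) + 1 = (1-δ)⁻¹ := by
    rw [hxdef, hadef]
    field_simp
    ring_nf
  -- the auxiliary function
  set f : (Fin n → Option (Fin M)) → ℝ≥0∞ :=
    fun ω => ∏ b : Fin M, (c * (if ∀ t, ω t ≠ some b then 1 else 0) + 1) with hfdef
  -- measure of "all bins in S empty"
  have h_measS : ∀ S : Finset (Fin M),
      μ {ω | ∀ b ∈ S, ∀ t, ω t ≠ some b} = ENNReal.ofReal ((1 - P * S.card / M)^n) := by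
    intro S
    have hset : {ω : Fin n → Option (Fin M) | ∀ b ∈ S, ∀ t, ω t ≠ some b}
        = Set.univ.pi (fun _ : Fin n => {o | ∀ b ∈ S, o ≠ some b}) := by
      ext ω
      simp only [Set.mem_setOf_eq, Set.mem_pi, Set.mem_univ, forall_true_left]
      constructor
      · intro h t b hb; exact h b hb t
      · intro h b hb t; exact h t b hb
    rw [hset, hμ, Measure.pi_pi]
    rw [Finset.prod_congr rfl (fun t _ => coord_meas M P (le_of_lt hP0) hp S)]
    rw [Finset.prod_const, Finset.card_univ, Fintype.card_fin,
      ← ENNReal.ofReal_pow]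
    have hk : (S.card:ℝ) ≤ M := by
      have := Finset.card_le_univ S
      simp only [Finset.card_univ, Fintype.card_fin] at this
      exact_mod_cast this
    have : P * S.card / M ≤ 1 := by
      rw [div_le_one (by exact_mod_cast hM)]
      nlinarith
    linarith
  -- expansion of f
  have h_expand : ∀ ω, f ω = ∑ S ∈ (Finset.univ : Finset (Fin M)).powerset,
      c^S.card * (if ∀ b ∈ S, ∀ t, ω t ≠ some b then 1 else 0) := by
    intro ω
    simp only [hfdef]
    rw [Finset.prod_add]
    apply Finset.sum_congr rfl
    intro S _
    rw [Finset.prod_const_one, mul_one, Finset.prod_mul_distrib, Finset.prod_const,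
      Finset.prod_boole]
    congr 1
    by_cases h : ∀ i ∈ S, ∀ t, ω t ≠ some i <;> simp [h]
  -- integral of f
  have h_int : ∫⁻ ω, f ω ∂μ = ∑ S ∈ (Finset.univ : Finset (Fin M)).powerset,
      c^S.card * μ {ω | ∀ b ∈ S, ∀ t, ω t ≠ some b} := by
    simp_rw [h_expand]
    rw [lintegral_finset_sum _ (fun S _ => Measurable.of_discrete)]
    apply Finset.sum_congr rfl
    intro S _
    rw [lintegral_const_mul _ Measurable.of_discrete]
    congr 1
    have : (fun ω : Fin n → Option (Fin M) =>
        (if ∀ b ∈ S, ∀ t, ω t ≠ some b then (1:ℝ≥0∞) else 0))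
        = Set.indicator {ω | ∀ b ∈ S, ∀ t, ω t ≠ some b} (fun _ => 1) := by
      ext ω
      rw [Set.indicator_apply]
      rfl
    rw [this, lintegral_indicator_const MeasurableSet.of_discrete, one_mul]
  -- sum of powers over powerset
  have h_sum_pow : ∀ y : ℝ≥0∞, ∑ S ∈ (Finset.univ : Finset (Fin M)).powerset, y^S.card
      = (y+1)^M := by
    intro y
    have := Finset.prod_add (fun _ : Fin M => y) (fun _ => 1) Finset.univ
    rw [Finset.prod_const, Finset.card_univ, Fintype.card_fin] at this
    rw [this]
    apply Finset.sum_congr rfl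
    intro S _
    rw [Finset.prod_const_one, mul_one, Finset.prod_const]
  -- bound the integral
  have h_le : ∫⁻ ω, f ω ∂μ ≤ ENNReal.ofReal (((1-δ)⁻¹)^M) := by
    rw [h_int]
    have step : ∀ S ∈ (Finset.univ : Finset (Fin M)).powerset,
        c^S.card * μ {ω | ∀ b ∈ S, ∀ t, ω t ≠ some b}
          ≤ (c * ENNReal.ofReal (1-q))^S.card := by
      intro S _
      rw [h_measS S, mul_pow]
      apply mul_le_mul_right
      rw [← ENNReal.ofReal_pow (by linarith : (0:ℝ) ≤ 1 - q)]
      apply ENNReal.ofReal_le_ofReal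
      have hk : (S.card:ℝ) ≤ M := by
        have := Finset.card_le_univ S
        simp only [Finset.card_univ, Fintype.card_fin] at this
        exact_mod_cast this
      have hbase : 0 ≤ 1 - P * S.card / M := by
        have : P * S.card / M ≤ 1 := by
          rw [div_le_one (by exact_mod_cast hM)]; nlinarith
        linarith
      calc (1 - P * S.card / M)^n ≤ (Real.exp (-(P * S.card / M)))^n := by
            apply pow_le_pow_left₀ hbase
            have := Real.add_one_le_exp (-(P * S.card / M))
            linarith
        _ = (1-q)^S.card := by
            rw [h1q, ← Real.exp_nat_mul, ← Real.exp_nat_mul]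
            congr 1
            field_simp
    calc ∑ S ∈ (Finset.univ : Finset (Fin M)).powerset,
        c^S.card * μ {ω | ∀ b ∈ S, ∀ t, ω t ≠ some b}
        ≤ ∑ S ∈ (Finset.univ : Finset (Fin M)).powerset, (c * ENNReal.ofReal (1-q))^S.card :=
          Finset.sum_le_sum step
      _ = (c * ENNReal.ofReal (1-q) + 1)^M := h_sum_pow _
      _ = ENNReal.ofReal (((1-δ)⁻¹)^M) := by
          rw [hcdef, ← ENNReal.ofReal_mul (by linarith), ← ENNReal.ofReal_one,
            ← ENNReal.ofReal_add (by nlinarith) (by norm_num), hxb,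
            ← ENNReal.ofReal_pow (by positivity)]
  -- f as a power
  have h_f_eq : ∀ ω, f ω = ENNReal.ofReal x ^
      ((Finset.univ.filter fun b : Fin M => ∀ t, ω t ≠ some b).card) := by
    intro ω
    simp only [hfdef]
    have hb : ∀ b : Fin M, (c * (if ∀ t, ω t ≠ some b then (1:ℝ≥0∞) else 0) + 1)
        = if ∀ t, ω t ≠ some b then c+1 else 1 := by
      intro b; by_cases h : ∀ t, ω t ≠ some b <;> simp [h]
    rw [Finset.prod_congr rfl (fun b _ => hb b), Finset.prod_ite, Finset.prod_const,
      Finset.prod_const_one, mul_one, hc1]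
  -- counting
  have h_card : ∀ ω : Fin n → Option (Fin M),
      (Finset.univ.filter fun b : Fin M => ∀ t, ω t ≠ some b).card
        = M - (Finset.univ.filter fun b : Fin M => ∃ t, ω t = some b).card := by
    intro ω
    have hpred : (fun b : Fin M => ∀ t, ω t ≠ some b) = (fun b => ¬ ∃ t, ω t = some b) := by
      ext b
      push_neg
      rfl
    simp only [hpred]
    rw [Finset.filter_not, Finset.card_sdiff_of_subset (Finset.filter_subset _ _)]
    simp
  set K : ℝ := (1-δ)*M*q with hK
  set ε : ℝ≥0∞ := ENNReal.ofReal (x ^ ((M:ℝ) - K)) with hε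
  have hsub : {ω : Fin n → Option (Fin M) |
        ((Finset.univ.filter fun b : Fin M => ∃ t, ω t = some b).card : ℝ) ≤ K}
      ⊆ {ω | ε ≤ f ω} := by
    intro ω hω
    simp only [Set.mem_setOf_eq] at hω ⊢
    rw [h_f_eq ω, h_card ω]
    set oc := (Finset.univ.filter fun b : Fin M => ∃ t, ω t = some b).card with hoc
    have hocM : oc ≤ M := by
      have := Finset.card_filter_le (Finset.univ : Finset (Fin M))
        (fun b => ∃ t, ω t = some b)
      simpa using this
    have hcast : ((M - oc : ℕ) : ℝ) = (M:ℝ) - oc := by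
      rw [Nat.cast_sub hocM]
    rw [hε, ← ENNReal.ofReal_pow (by linarith : (0:ℝ) ≤ x)]
    apply ENNReal.ofReal_le_ofReal
    rw [← Real.rpow_natCast x (M - oc)]
    apply Real.rpow_le_rpow_of_exponent_le hx1
    rw [hcast]
    linarith
  have hmar : ε * μ {ω : Fin n → Option (Fin M) |
        ((Finset.univ.filter fun b : Fin M => ∃ t, ω t = some b).card : ℝ) ≤ K}
      ≤ ENNReal.ofReal (((1-δ)⁻¹)^M) :=
    calc ε * μ {ω : Fin n → Option (Fin M) |
          ((Finset.univ.filter fun b : Fin M => ∃ t, ω t = some b).card : ℝ) ≤ K}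
        ≤ ε * μ {ω | ε ≤ f ω} := mul_le_mul_right (measure_mono hsub) ε
      _ ≤ ∫⁻ ω, f ω ∂μ := mul_meas_ge_le_lintegral₀ (Measurable.of_discrete).aemeasurable ε
      _ ≤ _ := h_le
  have hfr := final_real hδ0 hδ1 hq0 hq1 M
  have h2 : ENNReal.ofReal (((1-δ)⁻¹)^M)
      ≤ ENNReal.ofReal (2 * Real.exp (-δ^2 * M * q / 3)) * ε := by
    rw [hε, ← ENNReal.ofReal_mul (by positivity)]
    apply ENNReal.ofReal_le_ofReal
    exact hfr
  have hε0 : ε ≠ 0 := by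
    rw [hε]
    simp only [ne_eq, ENNReal.ofReal_eq_zero, not_le]
    exact Real.rpow_pos_of_pos hxpos _
  have hεtop : ε ≠ ⊤ := by rw [hε]; exact ENNReal.ofReal_ne_top
  have := (ENNReal.mul_le_mul_iff_right hε0 hεtop).mp
    (le_trans hmar (le_trans h2 (by rw [mul_comm])))
  exact this

/-- `n` balls are dropped independently into `m n` bins and one trash can; each
ball lands in the trash can with probability `1 - p n` and in each particular bin with
probability `p n / m n`.  `N₂` is the number of bins with at least one ball, and
`p̃₂ = 1 - exp (- n * p n / m n)`.  For every `δ ∈ (0,1)` and all sufficiently large `n`,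
`Pr (N₂ ≤ (1 - δ) * m n * p̃₂) ≤ 2 * exp (- δ² * m n * p̃₂ / 3)`. -/
theorem stmt_1 (δ : ℝ) (hδ0 : 0 < δ) (hδ1 : δ < 1) (m : ℕ → ℕ) (hm : ∀ n, 1 ≤ m n)
    (p : ℕ → ℝ) (hp0 : ∀ n, 0 < p n) (hp1 : ∀ n, p n ≤ 1) :
    ∃ n₀ : ℕ, ∀ n, n₀ ≤ n →
      (Measure.pi fun _ : Fin n =>
          (@ballPMF (m n) ⟨Nat.one_le_iff_ne_zero.mp (hm n)⟩ (ENNReal.ofReal (p n))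
            (ENNReal.ofReal_le_one.mpr (hp1 n))).toMeasure)
        {ω | ((Finset.univ.filter fun b : Fin (m n) => ∃ t, ω t = some b).card : ℝ) ≤
              (1 - δ) * (m n) * (1 - Real.exp (-((n : ℝ) * p n) / (m n)))}
        ≤ ENNReal.ofReal
            (2 * Real.exp
              (-δ ^ 2 * (m n) * (1 - Real.exp (-((n : ℝ) * p n) / (m n))) / 3)) := by
  refine ⟨0, fun n _ => ?_⟩
  haveI : NeZero (m n) := ⟨Nat.one_le_iff_ne_zero.mp (hm n)⟩
  exact main_bound n (m n) δ (p n) hδ0 hδ1 (hp0 n) (ENNReal.ofReal_le_one.mpr (hp1 n))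
end

section
/- There exists a constant c > 0 such that for every integer m ≥ 2 and every integer t ≥ c·m²·log m, the t-step transition probabilities P^t of the lazy random walk on the cycle ZMod m satisfy max_{i ∈ ZMod m} Σ_{j ∈ ZMod m} | P^t(i,j) − 1/m | ≤ 1/m⁴. -/
open MeasureTheory ProbabilityTheory
open scoped ENNReal

/-- The law of `t` i.i.d. increment symbols for the lazy random walk on a cycle, each uniform
on the three possibilities (`-1`, `0`, `+1`). -/
noncomputable def cycleStepsMeasure (t : ℕ) : Measure (Fin t → Fin 3) :=
  (PMF.uniformOfFintype (Fin t → Fin 3)).toMeasure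

/-- The `t`-step transition probability `P^t(i,j)` of the lazy random walk on the cycle
`ZMod m`: the probability that the walk started at `i`, whose increment encoded by the symbol
`s : Fin 3` is `(s : ZMod m) - 1 ∈ {-1, 0, +1}` (each with probability `1/3`), is at `j` after
`t` steps. -/
noncomputable def cycleTrans (m t : ℕ) (i j : ZMod m) : ℝ :=
  ((cycleStepsMeasure t)
    {ω | i + ∑ s : Fin t, (((ω s : ℕ) : ZMod m) - 1) = j}).toReal


section Aux
open Complex

noncomputable def lam (m : ℕ) (k : ZMod m) : ℝ :=
  (1 + 2 * Real.cos (2 * Real.pi * (ZMod.val k) / m)) / 3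


noncomputable def Fcnt (m t : ℕ) (a : ZMod m) : ℕ :=
  (Finset.univ.filter fun ω : Fin t → Fin 3 => (∑ s : Fin t, (((ω s : ℕ) : ZMod m) - 1)) = a).card


lemma trans_eq (m t : ℕ) [NeZero m] (i j : ZMod m) :
    cycleTrans m t i j = (Fcnt m t (j - i) : ℝ) / 3 ^ t := by
  classical
  set S : Finset (Fin t → Fin 3) :=
    Finset.univ.filter fun ω : Fin t → Fin 3 =>
      (∑ s : Fin t, (((ω s : ℕ) : ZMod m) - 1)) = j - i with hS
  have hset : {ω : Fin t → Fin 3 | i + ∑ s : Fin t, (((ω s : ℕ) : ZMod m) - 1) = j} = ↑S := by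
    ext ω
    simp only [hS, Set.mem_setOf_eq, Finset.coe_filter, Finset.mem_univ, true_and]
    constructor <;> intro h <;> linear_combination h
  rw [cycleTrans, cycleStepsMeasure, hset, PMF.toMeasure_apply_fintype]
  have hcard : Fintype.card (Fin t → Fin 3) = 3 ^ t := by simp
  simp only [Set.indicator_apply, Finset.mem_coe, PMF.uniformOfFintype_apply, hcard]
  rw [Finset.sum_ite_mem, Finset.univ_inter, Finset.sum_const]
  rw [nsmul_eq_mul, ENNReal.toReal_mul, ENNReal.toReal_inv]
  simp [Fcnt, hS, div_eq_mul_inv]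

lemma addchar_map_sum {m : ℕ} [NeZero m] {ι : Type*} (s : Finset ι) (f : ι → ZMod m) :
    ZMod.stdAddChar (∑ x ∈ s, f x) = ∏ x ∈ s, ZMod.stdAddChar (f x) := by
  classical
  induction s using Finset.cons_induction with
  | empty => simp [AddChar.map_zero_eq_one]
  | cons a s ha ih =>
      rw [Finset.sum_cons, Finset.prod_cons, AddChar.map_add_eq_mul, ih]


lemma charsum (m : ℕ) [NeZero m] (k : ZMod m) :
    ∑ x : Fin 3, ZMod.stdAddChar (k * (((x : ℕ) : ZMod m) - 1)) = ((3 * lam m k : ℝ) : ℂ) := by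
  have h1 : ZMod.stdAddChar k
      = Complex.exp (((2 * Real.pi * (ZMod.val k) / m : ℝ) : ℂ) * I) := by
    rw [ZMod.stdAddChar_apply, ZMod.toCircle_apply]
    congr 1; push_cast; ring
  have h2 : ZMod.stdAddChar (-k)
      = Complex.exp ((-(2 * Real.pi * (ZMod.val k) / m : ℝ) : ℂ) * I) := by
    rw [AddChar.map_neg_eq_inv, h1, ← Complex.exp_neg]
    congr 1; push_cast; ring
  rw [Fin.sum_univ_three]
  have e0 : k * ((((0 : Fin 3) : ℕ) : ZMod m) - 1) = -k := by
    norm_num [show ((0:Fin 3):ℕ) = 0 from rfl]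
  have e1 : k * ((((1 : Fin 3) : ℕ) : ZMod m) - 1) = 0 := by
    norm_num [show ((1:Fin 3):ℕ) = 1 from rfl]
  have e2 : k * ((((2 : Fin 3) : ℕ) : ZMod m) - 1) = k := by
    norm_num [show ((2:Fin 3):ℕ) = 2 from rfl]
  rw [e0, e1, e2, AddChar.map_zero_eq_one, h1, h2, exp_mul_I, exp_mul_I, lam]
  simp only [← Complex.ofReal_neg, ← Complex.ofReal_cos, ← Complex.ofReal_sin,
    Real.cos_neg, Real.sin_neg]
  push_cast
  ring

lemma fourierCnt (m t : ℕ) [NeZero m] (a : ZMod m) :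
    (Fcnt m t a : ℂ) * m
      = ∑ k : ZMod m, ZMod.stdAddChar (-(k * a)) * ((3 * lam m k : ℝ) : ℂ) ^ t := by
  classical
  have step1 : ∀ k : ZMod m, ((3 * lam m k : ℝ) : ℂ) ^ t
      = ∑ ω : Fin t → Fin 3, ∏ s : Fin t, ZMod.stdAddChar (k * (((ω s : ℕ) : ZMod m) - 1)) := by
    intro k
    rw [← charsum m k]
    have h1 : (∑ x : Fin 3, ZMod.stdAddChar (k * (((x : ℕ) : ZMod m) - 1))) ^ t
        = ∏ _s : Fin t, ∑ x : Fin 3, ZMod.stdAddChar (k * (((x : ℕ) : ZMod m) - 1)) := by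
      simp [Finset.prod_const]
    rw [h1, Finset.prod_univ_sum (fun _ : Fin t => (Finset.univ : Finset (Fin 3)))
      (fun _ x => ZMod.stdAddChar (k * (((x : ℕ) : ZMod m) - 1))), Fintype.piFinset_univ]
  symm
  calc ∑ k : ZMod m, ZMod.stdAddChar (-(k * a)) * ((3 * lam m k : ℝ) : ℂ) ^ t
      = ∑ k : ZMod m, ∑ ω : Fin t → Fin 3,
          ZMod.stdAddChar (k * ((∑ s : Fin t, (((ω s : ℕ) : ZMod m) - 1)) - a)) := by
        refine Finset.sum_congr rfl fun k _ => ?_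
        rw [step1, Finset.mul_sum]
        refine Finset.sum_congr rfl fun ω _ => ?_
        rw [← addchar_map_sum, ← AddChar.map_add_eq_mul]
        congr 1
        rw [mul_sub, Finset.mul_sum]
        ring
    _ = ∑ ω : Fin t → Fin 3, ∑ k : ZMod m,
          ZMod.stdAddChar (k * ((∑ s : Fin t, (((ω s : ℕ) : ZMod m) - 1)) - a)) :=
        Finset.sum_comm
    _ = ∑ ω : Fin t → Fin 3,
          if (∑ s : Fin t, (((ω s : ℕ) : ZMod m) - 1)) - a = 0 then (Fintype.card (ZMod m) : ℂ)
          else 0 := by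
        refine Finset.sum_congr rfl fun ω _ => ?_
        rw [AddChar.sum_mulShift _ (ZMod.isPrimitive_stdAddChar m),
          apply_ite (Nat.cast : ℕ → ℂ), Nat.cast_zero]
    _ = (Fcnt m t a : ℂ) * m := by
        simp only [sub_eq_zero, ZMod.card]
        rw [Finset.sum_ite, Finset.sum_const, Finset.sum_const, Fcnt]
        simp [mul_comm]

lemma lam_zero (m : ℕ) [NeZero m] : lam m 0 = 1 := by
  simp [lam]; norm_num


lemma lam_bound (m : ℕ) [NeZero m] (hm : 2 ≤ m) (k : ZMod m) (hk : k ≠ 0) :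
    |lam m k| ≤ 1 - 4 / (3 * (m : ℝ) ^ 2) := by
  have hM : (2 : ℝ) ≤ (m : ℝ) := by exact_mod_cast hm
  have hM0 : (0 : ℝ) < m := by linarith
  have hπ := Real.pi_pos
  have hv1 : 1 ≤ ZMod.val k := Nat.one_le_iff_ne_zero.2 (by
    simpa [ZMod.val_eq_zero] using hk)
  have hv2 : ZMod.val k < m := ZMod.val_lt k
  have hv1' : (1 : ℝ) ≤ (ZMod.val k : ℝ) := by exact_mod_cast hv1
  have hv2' : (ZMod.val k : ℝ) ≤ (m : ℝ) - 1 := by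
    have : (ZMod.val k : ℝ) + 1 ≤ (m : ℝ) := by exact_mod_cast Nat.succ_le_of_lt hv2
    linarith
  set x : ℝ := Real.pi * (ZMod.val k) / m with hxdef
  have hx0 : 0 < x := by positivity
  have hxe : x = (Real.pi / m) * (ZMod.val k) := by rw [hxdef]; ring
  have h1 : Real.pi / m ≤ x := by
    rw [hxe]
    nlinarith [div_pos hπ hM0]
  have h2 : x ≤ Real.pi - Real.pi / m := by
    rw [hxe]
    have e : Real.pi - Real.pi / m = (Real.pi / m) * ((m : ℝ) - 1) := by
      field_simp
    rw [e]
    nlinarith [div_pos hπ hM0]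
  have harg : 2 * Real.pi * (ZMod.val k : ℝ) / m = 2 * x := by rw [hxdef]; ring
  clear hxe hxdef
  clear_value x
  -- sin x ≥ 2 / m
  have hs : 2 / (m : ℝ) ≤ Real.sin x := by
    have hy2 : min x (Real.pi - x) ≤ Real.pi / 2 := by
      rcases min_le_iff.2 (Or.inl (le_refl x)) with _
      cases le_total x (Real.pi - x) with
      | inl h => rw [min_eq_left h]; linarith
      | inr h => rw [min_eq_right h]; linarith
    have hy1 : Real.pi / m ≤ min x (Real.pi - x) := le_min h1 (by linarith)
    have hy0 : 0 ≤ min x (Real.pi - x) := le_trans (by positivity) hy1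
    have hjordan : 2 / Real.pi * min x (Real.pi - x) ≤ Real.sin (min x (Real.pi - x)) :=
      Real.mul_le_sin hy0 hy2
    have hsin_eq : Real.sin (min x (Real.pi - x)) = Real.sin x := by
      cases le_total x (Real.pi - x) with
      | inl h => rw [min_eq_left h]
      | inr h => rw [min_eq_right h, Real.sin_pi_sub]
    have h2m : 2 / (m : ℝ) ≤ 2 / Real.pi * min x (Real.pi - x) := by
      have : 2 / Real.pi * (Real.pi / m) = 2 / (m : ℝ) := by field_simp
      rw [← this]
      have h2π : (0:ℝ) ≤ 2 / Real.pi := by positivity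
      exact mul_le_mul_of_nonneg_left hy1 h2π
    linarith [hsin_eq ▸ hjordan]
  have hsq : (4 : ℝ) / (m : ℝ) ^ 2 ≤ Real.sin x ^ 2 := by
    have h0 : (0:ℝ) ≤ 2 / m := by positivity
    have := pow_le_pow_left₀ h0 hs 2
    calc (4 : ℝ) / (m : ℝ) ^ 2 = (2 / (m:ℝ)) ^ 2 := by rw [div_pow]; norm_num
      _ ≤ _ := this
  have hcos2 : Real.cos (2 * x) ≤ 1 - 8 / (m : ℝ) ^ 2 := by
    have hpy := Real.sin_sq_add_cos_sq x
    have hdb := Real.cos_two_mul x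
    have e : 8 / (m : ℝ) ^ 2 = 2 * (4 / (m : ℝ) ^ 2) := by ring
    rw [e]; linarith
  have hcosm1 := Real.neg_one_le_cos (2 * x)
  rw [lam, harg]
  have hu : (0:ℝ) < 1 / (m:ℝ)^2 := by positivity
  have hu4 : (1:ℝ) / (m:ℝ)^2 ≤ 1 / 4 := by
    apply one_div_le_one_div_of_le
    · norm_num
    · nlinarith
  rw [abs_le]
  constructor
  · have e1 : (4:ℝ) / (3 * (m:ℝ)^2) = (4/3) * (1/(m:ℝ)^2) := by ring
    rw [e1]; nlinarith
  · have e1 : (4:ℝ) / (3 * (m:ℝ)^2) = (4/3) * (1/(m:ℝ)^2) := by ring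
    have e2 : (8:ℝ) / (m:ℝ)^2 = 8 * (1/(m:ℝ)^2) := by ring
    rw [e1]
    rw [e2] at hcos2
    linarith

lemma point_bound (m t : ℕ) [NeZero m] (hm : 2 ≤ m) (a : ZMod m) :
    |(Fcnt m t a : ℝ) / 3 ^ t - 1 / m| ≤ (1 - 4 / (3 * (m : ℝ) ^ 2)) ^ t := by
  classical
  have hm0 : (m : ℂ) ≠ 0 := by
    exact_mod_cast Nat.cast_ne_zero.2 (by omega : m ≠ 0)
  have h3 : ((3 : ℂ)) ^ t ≠ 0 := pow_ne_zero _ (by norm_num)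
  set S : ℂ := ∑ k ∈ (Finset.univ.erase (0 : ZMod m)),
    ZMod.stdAddChar (-(k * a)) * ((lam m k : ℝ) : ℂ) ^ t with hSdef
  -- identity
  have hsplit : (Fcnt m t a : ℂ) * m = 3 ^ t + 3 ^ t * S := by
    rw [fourierCnt m t a, ← Finset.add_sum_erase _ _ (Finset.mem_univ (0 : ZMod m))]
    congr 1
    · rw [lam_zero]
      norm_num [AddChar.map_zero_eq_one]
    · rw [hSdef, Finset.mul_sum]
      refine Finset.sum_congr rfl fun k _ => ?_
      push_cast
      ring
  have hident : ((Fcnt m t a : ℝ) / 3 ^ t - 1 / m : ℝ) = ‖S / m‖ →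
    True := fun _ => trivial
  have hkey : (((Fcnt m t a : ℝ) / 3 ^ t - 1 / m : ℝ) : ℂ) = S / m := by
    push_cast
    field_simp
    linear_combination hsplit
  -- bound abs S
  have hρ0 : (0 : ℝ) ≤ 1 - 4 / (3 * (m : ℝ) ^ 2) := by
    have hM : (2 : ℝ) ≤ (m : ℝ) := by exact_mod_cast hm
    have h4 : (4:ℝ) ≤ (m:ℝ)^2 := by nlinarith
    have : 4 / (3 * (m : ℝ) ^ 2) ≤ 4 / (3 * 4) := by
      apply div_le_div_of_nonneg_left (by norm_num) (by norm_num)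
      · linarith
    linarith
  have hterm : ∀ k ∈ Finset.univ.erase (0 : ZMod m),
      ‖ZMod.stdAddChar (-(k * a)) * ((lam m k : ℝ) : ℂ) ^ t‖
        ≤ (1 - 4 / (3 * (m : ℝ) ^ 2)) ^ t := by
    intro k hk
    have hk0 : k ≠ 0 := (Finset.mem_erase.mp hk).1
    rw [norm_mul, norm_pow, Complex.norm_real, Real.norm_eq_abs]
    have h1 : ‖(ZMod.stdAddChar (-(k * a)) : ℂ)‖ = 1 := by
      rw [ZMod.stdAddChar_apply]
      exact Circle.norm_coe _
    rw [h1, one_mul]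
    exact pow_le_pow_left₀ (abs_nonneg _) (lam_bound m hm k hk0) t
  have habsS : ‖S‖
      ≤ ((Finset.univ.erase (0 : ZMod m)).card : ℝ) * (1 - 4 / (3 * (m : ℝ) ^ 2)) ^ t := by
    rw [hSdef]
    refine le_trans (norm_sum_le _ _) ?_
    have := Finset.sum_le_card_nsmul (Finset.univ.erase (0 : ZMod m))
      (fun k => ‖ZMod.stdAddChar (-(k * a)) * ((lam m k : ℝ) : ℂ) ^ t‖)
      ((1 - 4 / (3 * (m : ℝ) ^ 2)) ^ t) hterm
    simpa [nsmul_eq_mul] using this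
  have hcard : ((Finset.univ.erase (0 : ZMod m)).card : ℝ) ≤ (m : ℝ) := by
    have : (Finset.univ.erase (0 : ZMod m)).card ≤ Fintype.card (ZMod m) :=
      le_trans (Finset.card_erase_le) (le_of_eq Finset.card_univ)
    rw [ZMod.card] at this
    exact_mod_cast this
  have hm0' : (0 : ℝ) < (m : ℝ) := by
    have : 0 < m := by omega
    exact_mod_cast this
  calc |(Fcnt m t a : ℝ) / 3 ^ t - 1 / m|
      = ‖((((Fcnt m t a : ℝ) / 3 ^ t - 1 / m : ℝ)) : ℂ)‖ := by
        rw [Complex.norm_real, Real.norm_eq_abs]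
    _ = ‖S / m‖ := by rw [hkey]
    _ = ‖S‖ / m := by
        rw [norm_div, Complex.norm_natCast]
    _ ≤ (((Finset.univ.erase (0 : ZMod m)).card : ℝ)
          * (1 - 4 / (3 * (m : ℝ) ^ 2)) ^ t) / m := by
        exact div_le_div_of_nonneg_right habsS hm0'.le
    _ ≤ (1 - 4 / (3 * (m : ℝ) ^ 2)) ^ t := by
        rw [div_le_iff₀ hm0']
        have hpow : (0:ℝ) ≤ (1 - 4 / (3 * (m : ℝ) ^ 2)) ^ t := pow_nonneg hρ0 t
        nlinarith

end Aux

/-- There is a constant `c > 0` such that for every `m ≥ 2` and every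
`t ≥ c * m² * log m`, the `t`-step transition probabilities of the lazy random walk on the
cycle `ZMod m` satisfy `max_i ∑_j |P^t(i,j) - 1/m| ≤ 1/m⁴`. -/
theorem stmt_3 :
    ∃ c : ℝ, 0 < c ∧
      ∀ (m : ℕ) [NeZero m], 2 ≤ m → ∀ t : ℕ, c * m ^ 2 * Real.log m ≤ t →
        ∀ i : ZMod m, ∑ j : ZMod m, |cycleTrans m t i j - 1 / m| ≤ 1 / (m : ℝ) ^ 4 := by
  refine ⟨4, by norm_num, ?_⟩
  intro m _ hm t ht i
  have hM : (2 : ℝ) ≤ (m : ℝ) := by exact_mod_cast hm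
  have hM0 : (0 : ℝ) < (m : ℝ) := by linarith
  have hρ0 : (0 : ℝ) ≤ 1 - 4 / (3 * (m : ℝ) ^ 2) := by
    have h4 : (4:ℝ) ≤ (m:ℝ)^2 := by nlinarith
    have : 4 / (3 * (m : ℝ) ^ 2) ≤ 4 / (3 * 4) := by
      apply div_le_div_of_nonneg_left (by norm_num) (by norm_num)
      linarith
    linarith
  have hstep : ∀ j : ZMod m, |cycleTrans m t i j - 1 / m|
      ≤ (1 - 4 / (3 * (m : ℝ) ^ 2)) ^ t := by
    intro j
    rw [trans_eq]
    exact point_bound m t hm (j - i)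
  have hsum : ∑ j : ZMod m, |cycleTrans m t i j - 1 / m|
      ≤ (m : ℝ) * (1 - 4 / (3 * (m : ℝ) ^ 2)) ^ t := by
    calc ∑ j : ZMod m, |cycleTrans m t i j - 1 / m|
        ≤ ∑ _j : ZMod m, (1 - 4 / (3 * (m : ℝ) ^ 2)) ^ t :=
          Finset.sum_le_sum fun j _ => hstep j
      _ = (m : ℝ) * (1 - 4 / (3 * (m : ℝ) ^ 2)) ^ t := by
          rw [Finset.sum_const, Finset.card_univ, ZMod.card, nsmul_eq_mul]
  have hexp1 : (1 - 4 / (3 * (m : ℝ) ^ 2)) ≤ Real.exp (-(4 / (3 * (m : ℝ) ^ 2))) := by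
    have := Real.add_one_le_exp (-(4 / (3 * (m : ℝ) ^ 2)))
    linarith
  have hexp2 : (1 - 4 / (3 * (m : ℝ) ^ 2)) ^ t
      ≤ Real.exp (-(4 / (3 * (m : ℝ) ^ 2)) * t) := by
    calc (1 - 4 / (3 * (m : ℝ) ^ 2)) ^ t
        ≤ (Real.exp (-(4 / (3 * (m : ℝ) ^ 2)))) ^ t := pow_le_pow_left₀ hρ0 hexp1 t
      _ = Real.exp (-(4 / (3 * (m : ℝ) ^ 2)) * t) := by
          rw [← Real.exp_nat_mul]; ring_nf
  have hlog : 0 ≤ Real.log m := Real.log_nonneg (by linarith)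
  have hkey : 5 * Real.log m ≤ 4 / (3 * (m : ℝ) ^ 2) * t := by
    have hpos : (0:ℝ) < 4 / (3 * (m : ℝ) ^ 2) := by positivity
    have h1 : 4 / (3 * (m : ℝ) ^ 2) * (4 * (m:ℝ) ^ 2 * Real.log m)
        ≤ 4 / (3 * (m : ℝ) ^ 2) * t := mul_le_mul_of_nonneg_left ht hpos.le
    have h2 : 4 / (3 * (m : ℝ) ^ 2) * (4 * (m:ℝ) ^ 2 * Real.log m)
        = 16 / 3 * Real.log m := by
      field_simp
      ring
    rw [h2] at h1
    linarith
  have hfin : Real.exp (-(4 / (3 * (m : ℝ) ^ 2)) * t) ≤ 1 / (m : ℝ) ^ 5 := by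
    have h1 : Real.exp (-(4 / (3 * (m : ℝ) ^ 2)) * t) ≤ Real.exp (-(5 * Real.log m)) := by
      apply Real.exp_le_exp.2
      nlinarith
    have h2 : Real.exp (-(5 * Real.log m)) = 1 / (m : ℝ) ^ 5 := by
      rw [Real.exp_neg, show (5:ℝ) = ((5:ℕ):ℝ) by norm_num, ← Real.log_pow,
        Real.exp_log (by positivity), one_div]
    rw [h2] at h1
    exact h1
  have hlast : (m : ℝ) * (1 / (m : ℝ) ^ 5) = 1 / (m : ℝ) ^ 4 := by
    field_simp
  calc ∑ j : ZMod m, |cycleTrans m t i j - 1 / m|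
      ≤ (m : ℝ) * (1 - 4 / (3 * (m : ℝ) ^ 2)) ^ t := hsum
    _ ≤ (m : ℝ) * Real.exp (-(4 / (3 * (m : ℝ) ^ 2)) * t) :=
        mul_le_mul_of_nonneg_left hexp2 hM0.le
    _ ≤ (m : ℝ) * (1 / (m : ℝ) ^ 5) := mul_le_mul_of_nonneg_left hfin hM0.le
    _ = 1 / (m : ℝ) ^ 4 := hlast
end

section
/- There exists a constant c > 0 such that for every integer m ≥ 2 and every integer t ≥ c·m²·log m, the t-step transition probabilities P^t of the lazy king random walk on the discrete torus (ZMod m) × (ZMod m) satisfy max_{i} Σ_{j} | P^t(i,j) − 1/m² | ≤ 1/m⁴, where the maximum is over all states i and the sum is over all states j of the torus. -/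
open MeasureTheory ProbabilityTheory
open scoped ENNReal

/-- The law of `t` i.i.d. increment symbols for the lazy king random walk, each uniform on the
nine possibilities. -/
noncomputable def kingStepsMeasure (t : ℕ) : Measure (Fin t → Fin 3 × Fin 3) :=
  (PMF.uniformOfFintype (Fin t → Fin 3 × Fin 3)).toMeasure

/-- The `t`-step transition probability `P^t(i,j)` of the lazy king random walk on the discrete
torus `ZMod m × ZMod m`: the probability that the walk started at `i`, whose increment in each
coordinate encoded by the symbol `s : Fin 3` is `(s : ZMod m) - 1 ∈ {-1, 0, +1}` (each
coordinate independent and uniform, so each of the nine moves has probability `1/9`), is at `j`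
after `t` steps. -/
noncomputable def kingTrans (m t : ℕ) (i j : ZMod m × ZMod m) : ℝ :=
  ((kingStepsMeasure t)
    {ω | (i.1 + ∑ s : Fin t, ((((ω s).1 : ℕ) : ZMod m) - 1),
          i.2 + ∑ s : Fin t, ((((ω s).2 : ℕ) : ZMod m) - 1)) = j}).toReal

namespace StmtFive

open Finset

variable (m t : ℕ)

/-- number of 1D increment words with total displacement `r`. -/
def cnt (r : ZMod m) : ℕ :=
  (Finset.univ.filter fun f : Fin t → Fin 3 =>
    (∑ s : Fin t, (((f s : ℕ) : ZMod m) - 1)) = r).card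

/-- 1D `t`-step displacement probability. -/
noncomputable def q (r : ZMod m) : ℝ := cnt m t r / 3 ^ t

lemma q_nonneg (r : ZMod m) : 0 ≤ q m t r := by
  unfold q; positivity

lemma sum_cnt [NeZero m] : ∑ r : ZMod m, cnt m t r = 3 ^ t := by
  classical
  have h := Finset.card_eq_sum_card_fiberwise
    (f := fun f : Fin t → Fin 3 => ∑ s : Fin t, (((f s : ℕ) : ZMod m) - 1))
    (s := Finset.univ) (t := Finset.univ) (fun x _ => Finset.mem_univ _)
  simp only [Finset.card_univ, Fintype.card_fun, Fintype.card_fin] at h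
  simp only [cnt]
  exact h.symm

lemma sum_q [NeZero m] : ∑ r : ZMod m, q m t r = 1 := by
  have h3 : ((3 : ℝ) ^ t) ≠ 0 := by positivity
  rw [show (1:ℝ) = (3:ℝ)^t / 3^t by field_simp]
  unfold q
  rw [← Finset.sum_div]
  congr 1
  rw [← Nat.cast_sum, sum_cnt]
  push_cast
  ring


lemma card_pair_filter [NeZero m] (y z : ZMod m) :
    (Finset.univ.filter fun ω : Fin t → Fin 3 × Fin 3 =>
        (∑ s : Fin t, ((((ω s).1 : ℕ) : ZMod m) - 1) = y)
        ∧ (∑ s : Fin t, ((((ω s).2 : ℕ) : ZMod m) - 1) = z)).card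
      = cnt m t y * cnt m t z := by
  classical
  unfold cnt
  rw [← Finset.card_product, ← Finset.filter_product]
  refine Finset.card_bij' (fun ω _ => ((fun s => (ω s).1), (fun s => (ω s).2)))
    (fun p _ => fun s => (p.1 s, p.2 s)) ?_ ?_ ?_ ?_
  · intro a ha
    simp only [Finset.mem_filter, Finset.mem_univ, true_and] at ha ⊢
    simpa [Finset.mem_product] using ha
  · intro p hp
    simp only [Finset.mem_filter, Finset.mem_product, Finset.mem_univ, true_and] at hp ⊢
    exact hp
  · intro a _; rfl
  · intro p _; rfl

lemma kingTrans_eq [NeZero m] (i j : ZMod m × ZMod m) :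
    kingTrans m t i j = q m t (j.1 - i.1) * q m t (j.2 - i.2) := by
  classical
  have hS : MeasurableSet {ω : Fin t → Fin 3 × Fin 3 |
      (i.1 + ∑ s : Fin t, ((((ω s).1 : ℕ) : ZMod m) - 1),
       i.2 + ∑ s : Fin t, ((((ω s).2 : ℕ) : ZMod m) - 1)) = j} :=
    (Set.toFinite _).measurableSet
  rw [kingTrans, kingStepsMeasure, PMF.toMeasure_uniformOfFintype_apply _ hS,
    ENNReal.toReal_div]
  simp only [ENNReal.toReal_natCast]
  have heq : ∀ ω : Fin t → Fin 3 × Fin 3,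
      ((i.1 + ∑ s : Fin t, ((((ω s).1 : ℕ) : ZMod m) - 1),
        i.2 + ∑ s : Fin t, ((((ω s).2 : ℕ) : ZMod m) - 1)) = j)
      ↔ ((∑ s : Fin t, ((((ω s).1 : ℕ) : ZMod m) - 1) = j.1 - i.1)
        ∧ (∑ s : Fin t, ((((ω s).2 : ℕ) : ZMod m) - 1) = j.2 - i.2)) := by
    intro ω
    rw [Prod.ext_iff]
    constructor
    · rintro ⟨h1, h2⟩
      exact ⟨by rw [← h1]; ring, by rw [← h2]; ring⟩
    · rintro ⟨h1, h2⟩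
      exact ⟨by rw [h1]; ring, by rw [h2]; ring⟩
  rw [← Set.toFinset_card, Set.toFinset_setOf,
    Finset.filter_congr (fun ω _ => heq ω), card_pair_filter m t _ _]
  have hcard2 : (Fintype.card (Fin t → Fin 3 × Fin 3) : ℝ) = 3 ^ t * 3 ^ t := by
    simp only [Fintype.card_fun, Fintype.card_prod, Fintype.card_fin]
    push_cast
    rw [← mul_pow]
    norm_num
  rw [hcard2]
  unfold q
  push_cast
  rw [div_mul_div_comm]

lemma addChar_map_sum {A M : Type*} [AddCommMonoid A] [CommMonoid M] (ψ : AddChar A M)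
    {ι : Type*} (s : Finset ι) (f : ι → A) :
    ψ (∑ i ∈ s, f i) = ∏ i ∈ s, ψ (f i) := by
  classical
  induction s using Finset.cons_induction with
  | empty => simp
  | cons a s ha ih => rw [Finset.sum_cons, Finset.prod_cons, AddChar.map_add_eq_mul, ih]

lemma sum_stdAddChar_mul [NeZero m] (y : ZMod m) :
    ∑ k : ZMod m, ZMod.stdAddChar (y * k) = if y = 0 then (m : ℂ) else 0 := by
  split_ifs with h
  · simp only [h, zero_mul, AddChar.map_zero_eq_one, Finset.sum_const, Finset.card_univ,
      ZMod.card, nsmul_eq_mul, mul_one]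
  · simpa only [AddChar.mulShift_apply] using
      AddChar.sum_eq_zero_of_ne_one (ZMod.isPrimitive_stdAddChar m h)

/-- Eigenvalue of the 1D lazy walk at frequency `k`. -/
noncomputable def lam (k : ZMod m) : ℝ := (1 + 2 * Real.cos (2 * Real.pi * k.val / m)) / 3

lemma lam_zero [NeZero m] : lam m 0 = 1 := by
  unfold lam
  simp [ZMod.val_zero]
  norm_num

lemma S_eq [NeZero m] (k : ZMod m) :
    (∑ a : Fin 3, ZMod.stdAddChar (k * (((a : ℕ) : ZMod m) - 1))) = ((3 * lam m k : ℝ) : ℂ) := by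
  have e0 : k * ((((0 : Fin 3) : ℕ) : ZMod m) - 1) = -k := by
    norm_num
  have e1 : k * ((((1 : Fin 3) : ℕ) : ZMod m) - 1) = 0 := by
    norm_num
  have e2 : k * ((((2 : Fin 3) : ℕ) : ZMod m) - 1) = k := by
    norm_num
  rw [Fin.sum_univ_three, e0, e1, e2, AddChar.map_zero_eq_one]
  set θ : ℝ := 2 * Real.pi * k.val / m with hθ
  have hψk : ZMod.stdAddChar k = Complex.exp ((θ : ℂ) * Complex.I) := by
    rw [ZMod.stdAddChar_apply, ZMod.toCircle_apply]
    congr 1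
    push_cast [hθ]
    ring
  have hψnk : ZMod.stdAddChar (-k) = Complex.exp (-(θ : ℂ) * Complex.I) := by
    have hcast : ((-(k.val : ℤ) : ℤ) : ZMod m) = -k := by
      push_cast
      rw [ZMod.natCast_zmod_val]
    rw [← hcast, ZMod.stdAddChar_coe]
    congr 1
    push_cast [hθ]
    ring
  rw [hψk, hψnk]
  have h2c : Complex.exp ((θ : ℂ) * Complex.I) + Complex.exp (-(θ : ℂ) * Complex.I)
      = 2 * Complex.cos (θ : ℂ) := (Complex.two_cos (θ : ℂ)).symm
  have : (((3 : ℝ) * lam m k : ℝ) : ℂ) = 1 + 2 * Complex.cos (θ : ℂ) := by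
    have h3 : (3 : ℝ) * lam m k = 1 + 2 * Real.cos θ := by unfold lam; ring
    rw [h3]
    push_cast [Complex.ofReal_cos]
    ring
  rw [this]
  linear_combination h2c

lemma cnt_fourier [NeZero m] (r : ZMod m) :
    (m : ℂ) * (cnt m t r : ℂ)
      = ∑ k : ZMod m, ZMod.stdAddChar (k * (-r))
          * (∑ a : Fin 3, ZMod.stdAddChar (k * (((a : ℕ) : ZMod m) - 1))) ^ t := by
  classical
  have hexp : ∀ k : ZMod m,
      (∑ a : Fin 3, ZMod.stdAddChar (k * (((a : ℕ) : ZMod m) - 1))) ^ t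
        = ∑ f : Fin t → Fin 3, ∏ s : Fin t,
            ZMod.stdAddChar (k * ((((f s) : ℕ) : ZMod m) - 1)) := by
    intro k
    have hpc : (∑ a : Fin 3, ZMod.stdAddChar (k * (((a : ℕ) : ZMod m) - 1))) ^ t
        = ∏ _s : Fin t, (∑ a : Fin 3, ZMod.stdAddChar (k * (((a : ℕ) : ZMod m) - 1))) := by
      rw [Finset.prod_const, Finset.card_univ, Fintype.card_fin]
    rw [hpc, Finset.prod_univ_sum]
    rw [Fintype.piFinset_univ]
  have step1 : ∀ (k : ZMod m) (f : Fin t → Fin 3),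
      ZMod.stdAddChar (k * (-r)) * ∏ s : Fin t,
          ZMod.stdAddChar (k * ((((f s) : ℕ) : ZMod m) - 1))
      = ZMod.stdAddChar (((∑ s : Fin t, ((((f s) : ℕ) : ZMod m) - 1)) - r) * k) := by
    intro k f
    rw [← addChar_map_sum, ← AddChar.map_add_eq_mul, ← Finset.mul_sum]
    congr 1
    ring
  symm
  calc ∑ k : ZMod m, ZMod.stdAddChar (k * (-r))
          * (∑ a : Fin 3, ZMod.stdAddChar (k * (((a : ℕ) : ZMod m) - 1))) ^ t
      = ∑ k : ZMod m, ∑ f : Fin t → Fin 3,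
          ZMod.stdAddChar (((∑ s : Fin t, ((((f s) : ℕ) : ZMod m) - 1)) - r) * k) := by
        refine Finset.sum_congr rfl fun k _ => ?_
        rw [hexp k, Finset.mul_sum]
        exact Finset.sum_congr rfl fun f _ => step1 k f
    _ = ∑ f : Fin t → Fin 3, ∑ k : ZMod m,
          ZMod.stdAddChar (((∑ s : Fin t, ((((f s) : ℕ) : ZMod m) - 1)) - r) * k) :=
        Finset.sum_comm
    _ = ∑ f : Fin t → Fin 3,
          if (∑ s : Fin t, ((((f s) : ℕ) : ZMod m) - 1)) = r then (m : ℂ) else 0 := by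
        refine Finset.sum_congr rfl fun f _ => ?_
        rw [sum_stdAddChar_mul]
        simp only [sub_eq_zero]
    _ = (m : ℂ) * (cnt m t r : ℂ) := by
        rw [← Finset.sum_filter, Finset.sum_const, nsmul_eq_mul]
        unfold cnt
        ring

lemma q_sub_bound [NeZero m] (r : ZMod m) :
    |q m t r - 1 / m| ≤ (1 / m) * ∑ k ∈ Finset.univ.erase (0 : ZMod m), |lam m k| ^ t := by
  classical
  have hm0 : (0 : ℝ) < m := by
    exact_mod_cast Nat.pos_of_ne_zero (NeZero.ne m)
  have hmc : (m : ℂ) ≠ 0 := Nat.cast_ne_zero.mpr (NeZero.ne m)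
  have h3c : ((3 : ℂ) ^ t) ≠ 0 := pow_ne_zero _ (by norm_num)
  have key : ((q m t r - 1 / m : ℝ) : ℂ)
      = (1 / ((m : ℂ) * 3 ^ t)) * ∑ k ∈ Finset.univ.erase (0 : ZMod m),
          ZMod.stdAddChar (k * (-r)) * ((3 * lam m k : ℝ) : ℂ) ^ t := by
    have h2 : (m : ℂ) * (cnt m t r : ℂ)
        = ∑ k : ZMod m, ZMod.stdAddChar (k * (-r)) * ((3 * lam m k : ℝ) : ℂ) ^ t := by
      rw [cnt_fourier m t r]
      exact Finset.sum_congr rfl fun k _ => by rw [S_eq]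
    rw [← Finset.add_sum_erase _ _ (Finset.mem_univ (0 : ZMod m))] at h2
    have h0 : ZMod.stdAddChar ((0 : ZMod m) * (-r)) * ((3 * lam m 0 : ℝ) : ℂ) ^ t
        = (3 : ℂ) ^ t := by
      rw [zero_mul, AddChar.map_zero_eq_one, one_mul, lam_zero]
      norm_num
    rw [h0] at h2
    have hS' : (∑ k ∈ Finset.univ.erase (0 : ZMod m),
          ZMod.stdAddChar (k * (-r)) * ((3 * lam m k : ℝ) : ℂ) ^ t)
        = (m : ℂ) * (cnt m t r : ℂ) - 3 ^ t := eq_sub_of_add_eq' h2.symm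
    rw [hS']
    unfold q
    push_cast
    field_simp
  have habs := congrArg norm key
  rw [Complex.norm_real, Real.norm_eq_abs] at habs
  rw [habs]
  have hterm : ∀ k : ZMod m,
      ‖ZMod.stdAddChar (k * (-r)) * ((3 * lam m k : ℝ) : ℂ) ^ t‖
        = 3 ^ t * |lam m k| ^ t := by
    intro k
    rw [norm_mul, norm_pow, Complex.norm_real, Real.norm_eq_abs, ZMod.stdAddChar_apply, Circle.norm_coe, one_mul,
      abs_mul, abs_of_nonneg (by norm_num : (0:ℝ) ≤ 3), mul_pow]
  calc ‖(1 / ((m : ℂ) * 3 ^ t)) * ∑ k ∈ Finset.univ.erase (0 : ZMod m),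
          ZMod.stdAddChar (k * (-r)) * ((3 * lam m k : ℝ) : ℂ) ^ t‖
      = (1 / (m * 3 ^ t)) * ‖∑ k ∈ Finset.univ.erase (0 : ZMod m),
          ZMod.stdAddChar (k * (-r)) * ((3 * lam m k : ℝ) : ℂ) ^ t‖ := by
        rw [norm_mul]
        congr 1
        rw [show (1 / ((m : ℂ) * 3 ^ t)) = (((1 / (m * 3 ^ t) : ℝ)) : ℂ) by push_cast; ring,
          Complex.norm_real, Real.norm_eq_abs, abs_of_nonneg (by positivity)]
    _ ≤ (1 / (m * 3 ^ t)) * ∑ k ∈ Finset.univ.erase (0 : ZMod m),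
          ‖ZMod.stdAddChar (k * (-r)) * ((3 * lam m k : ℝ) : ℂ) ^ t‖ := by
        refine mul_le_mul_of_nonneg_left ?_ (by positivity)
        exact norm_sum_le _ _
    _ = (1 / m) * ∑ k ∈ Finset.univ.erase (0 : ZMod m), |lam m k| ^ t := by
        rw [Finset.sum_congr rfl fun k _ => hterm k, ← Finset.mul_sum]
        field_simp

lemma cos_aux (hm : 2 ≤ m) (d : ℕ) (hd1 : 1 ≤ d) (hd2 : 2 * d ≤ m) :
    Real.cos (2 * Real.pi * d / m) ≤ 1 - 8 / (m : ℝ) ^ 2 := by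
  have hm0 : (0 : ℝ) < m := by exact_mod_cast (by omega : 0 < m)
  have hπ := Real.pi_pos
  have hd0 : (1 : ℝ) ≤ (d : ℝ) := by exact_mod_cast hd1
  have hdm : (2 : ℝ) * d ≤ m := by exact_mod_cast hd2
  have hx0 : 0 ≤ 2 * Real.pi * d / m := by positivity
  have hxπ : 2 * Real.pi * d / m ≤ Real.pi := by
    rw [div_le_iff₀ hm0]
    nlinarith
  have h := Real.cos_le_one_sub_mul_cos_sq (abs_le.mpr ⟨by linarith, hxπ⟩)
  have hx2 : 2 / Real.pi ^ 2 * (2 * Real.pi * d / m) ^ 2 = 8 * d ^ 2 / m ^ 2 := by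
    field_simp
    ring
  rw [hx2] at h
  have h8 : (8 : ℝ) ≤ 8 * d ^ 2 := by nlinarith
  have : 8 / (m : ℝ) ^ 2 ≤ 8 * d ^ 2 / m ^ 2 := by gcongr
  linarith

lemma lam_abs_le [NeZero m] (hm : 2 ≤ m) (k : ZMod m) (hk : k ≠ 0) :
    |lam m k| ≤ 1 - 8 / (3 * (m : ℝ) ^ 2) := by
  have hm0 : (0 : ℝ) < m := by exact_mod_cast Nat.pos_of_ne_zero (NeZero.ne m)
  have hmR : (2 : ℝ) ≤ m := by exact_mod_cast hm
  have hm4 : (4 : ℝ) ≤ (m : ℝ) ^ 2 := by nlinarith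
  have hv1 : 1 ≤ k.val := Nat.pos_of_ne_zero fun h => hk ((ZMod.val_eq_zero k).mp h)
  have hv2 : k.val < m := ZMod.val_lt k
  have hcos : Real.cos (2 * Real.pi * k.val / m) ≤ 1 - 8 / (m : ℝ) ^ 2 := by
    rcases le_or_gt (2 * k.val) m with hle | hlt
    · exact cos_aux m hm k.val hv1 hle
    · have hw1 : 1 ≤ m - k.val := by omega
      have hw2 : 2 * (m - k.val) ≤ m := by omega
      have hculr : Real.cos (2 * Real.pi * k.val / m)
          = Real.cos (2 * Real.pi * ((m - k.val : ℕ) : ℝ) / m) := by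
        have hc1 : ((m - k.val : ℕ) : ℝ) = (m : ℝ) - k.val := by
          push_cast [Nat.cast_sub hv2.le]
          ring
        have hc2 : 2 * Real.pi * ((m : ℝ) - k.val) / m
            = 2 * Real.pi - 2 * Real.pi * k.val / m := by
          field_simp
        rw [hc1, hc2, Real.cos_two_pi_sub]
      rw [hculr]
      exact cos_aux m hm (m - k.val) hw1 hw2
  have hcos2 : -1 ≤ Real.cos (2 * Real.pi * k.val / m) := Real.neg_one_le_cos _
  have hX2 : 8 / (m : ℝ) ^ 2 ≤ 2 := by
    rw [div_le_iff₀ (by positivity)]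
    nlinarith
  have hdiv : 8 / (3 * (m : ℝ) ^ 2) = (8 / (m : ℝ) ^ 2) / 3 := by
    field_simp
  rw [abs_le]
  unfold lam
  rw [hdiv]
  have hX0 : (0:ℝ) ≤ 8 / (m : ℝ) ^ 2 := by positivity
  constructor
  · linarith
  · linarith

lemma sum_abs_q_le [NeZero m] (hm : 2 ≤ m) (ht : 3 * (m : ℝ) ^ 2 * Real.log m ≤ t) :
    ∑ r : ZMod m, |q m t r - 1 / m| ≤ ((m : ℝ) ^ 7)⁻¹ := by
  classical
  have hm0 : (0 : ℝ) < m := by exact_mod_cast Nat.pos_of_ne_zero (NeZero.ne m)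
  have hmR : (2 : ℝ) ≤ m := by exact_mod_cast hm
  have hm2 : (0 : ℝ) < 3 * (m : ℝ) ^ 2 := by positivity
  have hB0 : (0 : ℝ) ≤ 1 - 8 / (3 * (m : ℝ) ^ 2) := by
    rw [sub_nonneg, div_le_one hm2]
    nlinarith
  have hBe : 1 - 8 / (3 * (m : ℝ) ^ 2) ≤ Real.exp (-(8 / (3 * (m : ℝ) ^ 2))) := by
    have := Real.add_one_le_exp (-(8 / (3 * (m : ℝ) ^ 2)))
    linarith
  have hlog : 0 ≤ Real.log m := Real.log_nonneg (by linarith)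
  have hE : ∑ k ∈ Finset.univ.erase (0 : ZMod m), |lam m k| ^ t
      ≤ m * (1 - 8 / (3 * (m : ℝ) ^ 2)) ^ t := by
    calc ∑ k ∈ Finset.univ.erase (0 : ZMod m), |lam m k| ^ t
        ≤ ∑ _k ∈ Finset.univ.erase (0 : ZMod m), (1 - 8 / (3 * (m : ℝ) ^ 2)) ^ t :=
          Finset.sum_le_sum fun k hk =>
            pow_le_pow_left₀ (abs_nonneg _) (lam_abs_le m hm k (Finset.ne_of_mem_erase hk)) t
      _ = ((Finset.univ.erase (0 : ZMod m)).card : ℝ) * (1 - 8 / (3 * (m : ℝ) ^ 2)) ^ t := by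
          rw [Finset.sum_const, nsmul_eq_mul]
      _ ≤ m * (1 - 8 / (3 * (m : ℝ) ^ 2)) ^ t := by
          refine mul_le_mul_of_nonneg_right ?_ (pow_nonneg hB0 t)
          have hc : (Finset.univ.erase (0 : ZMod m)).card ≤ m := by
            rw [Finset.card_erase_of_mem (Finset.mem_univ _), Finset.card_univ, ZMod.card]
            omega
          exact_mod_cast hc
  have hBt : (1 - 8 / (3 * (m : ℝ) ^ 2)) ^ t ≤ ((m : ℝ) ^ 8)⁻¹ := by
    calc (1 - 8 / (3 * (m : ℝ) ^ 2)) ^ t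
        ≤ (Real.exp (-(8 / (3 * (m : ℝ) ^ 2)))) ^ t := pow_le_pow_left₀ hB0 hBe t
      _ = Real.exp ((t : ℝ) * -(8 / (3 * (m : ℝ) ^ 2))) := by rw [← Real.exp_nat_mul]
      _ ≤ Real.exp (-(8 * Real.log m)) := by
          apply Real.exp_le_exp.mpr
          have h1 : 8 * Real.log m ≤ (t : ℝ) * (8 / (3 * (m : ℝ) ^ 2)) := by
            calc 8 * Real.log m = 8 * ((3 * (m : ℝ) ^ 2 * Real.log m) / (3 * (m : ℝ) ^ 2)) := by
                  field_simp
              _ ≤ 8 * ((t : ℝ) / (3 * (m : ℝ) ^ 2)) := by gcongr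
              _ = (t : ℝ) * (8 / (3 * (m : ℝ) ^ 2)) := by ring
          linarith [h1]
      _ = ((m : ℝ) ^ 8)⁻¹ := by
          rw [Real.exp_neg]
          congr 1
          rw [show (8 : ℝ) * Real.log m = ((8 : ℕ) : ℝ) * Real.log m by norm_num,
            Real.exp_nat_mul, Real.exp_log hm0]
  calc ∑ r : ZMod m, |q m t r - 1 / m|
      ≤ ∑ _r : ZMod m, (1 / m) * ∑ k ∈ Finset.univ.erase (0 : ZMod m), |lam m k| ^ t :=
        Finset.sum_le_sum fun r _ => q_sub_bound m t r
    _ = (m : ℝ) * ((1 / m) * ∑ k ∈ Finset.univ.erase (0 : ZMod m), |lam m k| ^ t) := by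
        rw [Finset.sum_const, Finset.card_univ, ZMod.card, nsmul_eq_mul]
    _ = ∑ k ∈ Finset.univ.erase (0 : ZMod m), |lam m k| ^ t := by
        field_simp
    _ ≤ m * (1 - 8 / (3 * (m : ℝ) ^ 2)) ^ t := hE
    _ ≤ m * ((m : ℝ) ^ 8)⁻¹ := mul_le_mul_of_nonneg_left hBt (le_of_lt hm0)
    _ = ((m : ℝ) ^ 7)⁻¹ := by
        field_simp

end StmtFive

/-- There is a constant `c > 0` such that for every `m ≥ 2` and every
`t ≥ c * m² * log m`, the `t`-step transition probabilities of the lazy king random walk on the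
discrete torus `ZMod m × ZMod m` satisfy `max_i ∑_j |P^t(i,j) - 1/m²| ≤ 1/m⁴`. -/
theorem stmt_5 :
    ∃ c : ℝ, 0 < c ∧
      ∀ (m : ℕ) [NeZero m], 2 ≤ m → ∀ t : ℕ, c * m ^ 2 * Real.log m ≤ t →
        ∀ i : ZMod m × ZMod m,
          ∑ j : ZMod m × ZMod m, |kingTrans m t i j - 1 / (m : ℝ) ^ 2| ≤ 1 / (m : ℝ) ^ 4 := by
  classical
  refine ⟨3, by norm_num, ?_⟩
  intro m _ hm t ht i
  have hm0 : (0 : ℝ) < m := by exact_mod_cast (by omega : 0 < m)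
  have hmR : (2 : ℝ) ≤ m := by exact_mod_cast hm
  have hD := StmtFive.sum_abs_q_le m t hm ht
  set u : ℝ := 1 / m with hu
  set D : ℝ := ∑ r : ZMod m, |StmtFive.q m t r - u| with hDdef
  have hsum_q := StmtFive.sum_q m t
  have step0 : ∑ j : ZMod m × ZMod m, |kingTrans m t i j - 1 / (m : ℝ) ^ 2|
      = ∑ p : ZMod m × ZMod m, |StmtFive.q m t p.1 * StmtFive.q m t p.2 - 1 / (m : ℝ) ^ 2| := by
    refine Fintype.sum_equiv ((Equiv.subRight i.1).prodCongr (Equiv.subRight i.2)) _ _ ?_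
    intro j
    rw [StmtFive.kingTrans_eq]
    simp [Equiv.prodCongr, Equiv.subRight]
  rw [step0]
  have hpt : ∀ p : ZMod m × ZMod m,
      |StmtFive.q m t p.1 * StmtFive.q m t p.2 - 1 / (m : ℝ) ^ 2|
      ≤ |StmtFive.q m t p.1 - u| * StmtFive.q m t p.2 + u * |StmtFive.q m t p.2 - u| := by
    intro p
    have hid : StmtFive.q m t p.1 * StmtFive.q m t p.2 - 1 / (m : ℝ) ^ 2
        = (StmtFive.q m t p.1 - u) * StmtFive.q m t p.2
          + u * (StmtFive.q m t p.2 - u) := by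
      rw [hu]
      field_simp
      ring
    rw [hid]
    refine (abs_add_le _ _).trans ?_
    rw [abs_mul, abs_mul, abs_of_nonneg (StmtFive.q_nonneg m t _),
      abs_of_nonneg (by positivity : (0 : ℝ) ≤ u)]
  have hmu : (m : ℝ) * u = 1 := by
    rw [hu]
    field_simp
  have hD0 : 0 ≤ D := Finset.sum_nonneg fun r _ => abs_nonneg _
  calc ∑ p : ZMod m × ZMod m, |StmtFive.q m t p.1 * StmtFive.q m t p.2 - 1 / (m : ℝ) ^ 2|
      ≤ ∑ p : ZMod m × ZMod m,
          (|StmtFive.q m t p.1 - u| * StmtFive.q m t p.2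
            + u * |StmtFive.q m t p.2 - u|) := Finset.sum_le_sum fun p _ => hpt p
    _ = D + (m : ℝ) * (u * D) := by
        have inner : ∀ a : ZMod m,
            ∑ b : ZMod m, (|StmtFive.q m t a - u| * StmtFive.q m t b
              + u * |StmtFive.q m t b - u|)
            = |StmtFive.q m t a - u| + u * D := by
          intro a
          rw [Finset.sum_add_distrib, ← Finset.mul_sum, ← Finset.mul_sum, hsum_q, mul_one]
        rw [Fintype.sum_prod_type, Finset.sum_congr rfl fun a _ => inner a,
          Finset.sum_add_distrib, Finset.sum_const, Finset.card_univ, ZMod.card, nsmul_eq_mul]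
    _ = 2 * D := by
        rw [← mul_assoc, hmu]
        ring
    _ ≤ 2 * ((m : ℝ) ^ 7)⁻¹ := by linarith
    _ ≤ 1 / (m : ℝ) ^ 4 := by
        have hpos : 0 ≤ ((m : ℝ) ^ 3 - 2) / (m : ℝ) ^ 7 :=
          div_nonneg (by nlinarith) (by positivity)
        have key : 1 / (m : ℝ) ^ 4 - 2 * ((m : ℝ) ^ 7)⁻¹
            = ((m : ℝ) ^ 3 - 2) / (m : ℝ) ^ 7 := by
          field_simp
        linarith
end
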